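/- arXiv:1507.08327 — 4 statements merged into one kernel-verified Lean document; each statement's English description precedes it below -/
import Mathlib

section
/- Generalized Blei inequality with exponents 1 and 2: let J > K > 0 be integers, N = C(J,K), and let S₁,…,S_N enumerate the subsets of {1,…,J} of cardinality K, with ∼S_α = {1,…,J} \ S_α. For any σ-finite measure spaces (X₁,μ₁),…,(X_J,μ_J) and any measurable function f(x₁,…,x_J) on X₁ × ⋯ × X_J, (∫_{{1,…,J}} |f|^{2J/(K+J)})^{(K+J)/(2J)} ≤ ∏_{α=1}^{N} [ ∫_{S_α} ( ∫_{∼S_α} |f|² )^{1/2} ]^{1/N}, where for E ⊂ {1,…,J} the notation ∫_E denotes integration over the product space ∏_{k∈E} X_k with the product of the measures μ_k, k ∈ E. -/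
open MeasureTheory Function Finset
open scoped ENNReal

set_option linter.unusedSectionVars false


lemma ennreal_rpow_two (x : ℝ≥0∞) : x ^ (2:ℝ) = x * x := by
  rw [show (2:ℝ) = ((2:ℕ):ℝ) by norm_num, ENNReal.rpow_natCast, pow_two]

lemma iSup_rpow_mono (g : ℕ → ℝ≥0∞) (hg : Monotone g) {c : ℝ} (hc : 0 ≤ c) :
    ⨆ n, g n ^ c = (⨆ n, g n) ^ c := by
  have h3 : Monotone fun n => g n ^ c := fun a b hab => ENNReal.rpow_le_rpow (hg hab) hc
  refine tendsto_nhds_unique (tendsto_atTop_iSup h3) ?_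
  exact (ENNReal.continuous_rpow_const.tendsto _).comp (tendsto_atTop_iSup hg)

lemma iSup_min_natCast (a : ℝ≥0∞) : ⨆ n : ℕ, min a n = a := by
  refine le_antisymm (iSup_le fun n => min_le_left _ _) ?_
  rcases eq_or_ne a ⊤ with rfl | ha
  · rw [iSup_congr (fun n : ℕ => min_eq_right (le_top : (n:ℝ≥0∞) ≤ ⊤)), ENNReal.iSup_natCast]
  · obtain ⟨n, hn⟩ := ENNReal.exists_nat_gt ha
    exact le_iSup_of_le n (le_min le_rfl hn.le)

/-- Minkowski's integral inequality for exponent 2, `ℝ≥0∞`-valued. -/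
theorem minkowski_two {A B : Type*} [MeasurableSpace A] [MeasurableSpace B]
    (μ : Measure A) (ν : Measure B) [SigmaFinite μ] [SigmaFinite ν]
    (h : A → B → ℝ≥0∞) (hm : Measurable (Function.uncurry h)) :
    (∫⁻ y, (∫⁻ x, h x y ∂μ) ^ (2:ℝ) ∂ν) ^ (1/2:ℝ)
      ≤ ∫⁻ x, (∫⁻ y, h x y ^ (2:ℝ) ∂ν) ^ (1/2:ℝ) ∂μ := by
  set R := ∫⁻ x, (∫⁻ y, h x y ^ (2:ℝ) ∂ν) ^ (1/2:ℝ) ∂μ with hR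
  set F : B → ℝ≥0∞ := fun y => ∫⁻ x, h x y ∂μ with hF
  have hFm : Measurable F := hm.lintegral_prod_left
  set G : ℕ → B → ℝ≥0∞ := fun n y => (spanningSets ν n).indicator (fun _ => min (F y) n) y
    with hG
  have hGm : ∀ n, Measurable (G n) :=
    fun n => ((hFm.min measurable_const).indicator (measurableSet_spanningSets ν n))
  have hGle : ∀ n y, G n y ≤ F y := by
    intro n y
    by_cases hy : y ∈ spanningSets ν n
    · simp [hG, Set.indicator_of_mem hy]
    · simp [hG, Set.indicator_of_notMem hy]
  have hGmono : Monotone G := by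
    intro m n hmn
    intro y
    by_cases hy : y ∈ spanningSets ν m
    · have hy' : y ∈ spanningSets ν n := monotone_spanningSets ν hmn hy
      simp only [hG, Set.indicator_of_mem hy, Set.indicator_of_mem hy']
      exact min_le_min le_rfl (Nat.cast_le.2 hmn)
    · simp [hG, Set.indicator_of_notMem hy]
  have hGsup : ∀ y, ⨆ n, G n y = F y := by
    intro y
    refine le_antisymm (iSup_le fun n => hGle n y) ?_
    have hy : y ∈ ⋃ n, spanningSets ν n := by rw [iUnion_spanningSets]; trivial
    obtain ⟨n₀, hn₀⟩ := Set.mem_iUnion.mp hy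
    rw [← iSup_min_natCast (F y)]
    refine iSup_le fun n => ?_
    refine le_iSup_of_le (max n n₀) ?_
    have hy' : y ∈ spanningSets ν (max n n₀) :=
      monotone_spanningSets ν (le_max_right _ _) hn₀
    simp only [hG, Set.indicator_of_mem hy']
    exact min_le_min le_rfl (Nat.cast_le.2 (le_max_left _ _))
  set An : ℕ → ℝ≥0∞ := fun n => ∫⁻ y, G n y ^ (2:ℝ) ∂ν with hAn
  have hAfin : ∀ n, An n ≠ ⊤ := by
    intro n
    have hb : ∀ y, G n y ^ (2:ℝ) ≤
        (spanningSets ν n).indicator (fun _ => (n:ℝ≥0∞) ^ (2:ℝ)) y := by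
      intro y
      by_cases hy : y ∈ spanningSets ν n
      · simp only [hG, Set.indicator_of_mem hy]
        exact ENNReal.rpow_le_rpow (min_le_right _ _) (by norm_num)
      · simp [hG, Set.indicator_of_notMem hy, ENNReal.zero_rpow_of_pos (by norm_num : (0:ℝ) < 2)]
    have := lintegral_mono (μ := ν) hb
    rw [lintegral_indicator_const (measurableSet_spanningSets ν n)] at this
    refine ne_top_of_le_ne_top ?_ this
    exact ENNReal.mul_ne_top (ENNReal.rpow_ne_top_of_nonneg (by norm_num)
      (ENNReal.natCast_ne_top n)) (measure_spanningSets_lt_top ν n).ne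
  have conj22 : Real.HolderConjugate 2 2 := Real.holderConjugate_iff.mpr ⟨one_lt_two, by norm_num⟩
  have key : ∀ n, An n ^ (1/2:ℝ) ≤ R := by
    intro n
    rcases eq_or_ne (An n) 0 with h0 | h0
    · rw [h0, ENNReal.zero_rpow_of_pos (by norm_num : (0:ℝ) < 1/2)]
      exact zero_le
    have hhy : ∀ x : A, Measurable fun y => h x y := fun x => hm.comp measurable_prodMk_left
    have hhx : ∀ y : B, Measurable fun x => h x y := fun y => hm.comp (measurable_prodMk_right)
    have hRm : Measurable fun x => (∫⁻ y, h x y ^ (2:ℝ) ∂ν) ^ (1/2:ℝ) :=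
      ((hm.pow_const (2:ℝ)).lintegral_prod_right').pow_const _
    have hchain : An n ≤ An n ^ (1/2:ℝ) * R := by
      calc An n = ∫⁻ y, G n y * G n y ∂ν := by simp_rw [hAn, ennreal_rpow_two]
      _ ≤ ∫⁻ y, G n y * F y ∂ν := lintegral_mono fun y => mul_le_mul_right (hGle n y) _
      _ = ∫⁻ y, ∫⁻ x, G n y * h x y ∂μ ∂ν := by
          refine lintegral_congr fun y => ?_
          rw [lintegral_const_mul _ (hhx y)]
      _ = ∫⁻ x, ∫⁻ y, G n y * h x y ∂ν ∂μ := by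
          rw [← lintegral_lintegral_swap]
          exact (((hGm n).comp measurable_snd).mul hm).aemeasurable
      _ ≤ ∫⁻ x, (∫⁻ y, G n y ^ (2:ℝ) ∂ν) ^ (1/2:ℝ) * (∫⁻ y, h x y ^ (2:ℝ) ∂ν) ^ (1/2:ℝ) ∂μ := by
          refine lintegral_mono fun x => ?_
          simpa using ENNReal.lintegral_mul_le_Lp_mul_Lq ν conj22 (hGm n).aemeasurable
            (hhy x).aemeasurable
      _ = An n ^ (1/2:ℝ) * R := by
          rw [hR, ← lintegral_const_mul _ hRm]
    have hfin : An n ^ (1/2:ℝ) ≠ ⊤ :=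
      ENNReal.rpow_ne_top_of_nonneg (by norm_num) (hAfin n)
    have hne : An n ^ (1/2:ℝ) ≠ 0 := by
      rw [Ne, ENNReal.rpow_eq_zero_iff]
      push_neg
      constructor
      · intro h'; exact absurd h' h0
      · intro h'; norm_num
    have hmul : An n ^ (1/2:ℝ) * An n ^ (1/2:ℝ) ≤ An n ^ (1/2:ℝ) * R := by
      rw [← ENNReal.rpow_add _ _ h0 (hAfin n)]
      norm_num
      exact hchain
    exact (ENNReal.mul_le_mul_iff_right hne hfin).mp hmul
  have hsup : ∫⁻ y, F y ^ (2:ℝ) ∂ν = ⨆ n, An n := by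
    have hpt : ∀ y, F y ^ (2:ℝ) = ⨆ n, G n y ^ (2:ℝ) := by
      intro y
      rw [iSup_rpow_mono (fun n => G n y) (fun a b hab => hGmono hab y) (by norm_num : (0:ℝ) ≤ 2),
        hGsup]
    calc ∫⁻ y, F y ^ (2:ℝ) ∂ν = ∫⁻ y, ⨆ n, G n y ^ (2:ℝ) ∂ν := lintegral_congr hpt
    _ = ⨆ n, An n := by
        rw [lintegral_iSup (fun n => (hGm n).pow_const _)
          (fun a b hab y => ENNReal.rpow_le_rpow (hGmono hab y) (by norm_num))]
  rw [hsup, ← iSup_rpow_mono An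
    (fun a b hab => lintegral_mono fun y => ENNReal.rpow_le_rpow (hGmono hab y) (by norm_num))
    (by norm_num : (0:ℝ) ≤ 1/2)]
  exact iSup_le key


section Blei



variable {ι : Type*} [DecidableEq ι] {π : ι → Type*} [∀ i, MeasurableSpace (π i)]
  (μ : ∀ i, Measure (π i)) [∀ i, SigmaFinite (μ i)]

/-- One-variable `L^e` norm in coordinate `j`. -/
noncomputable def nrm (e : ℝ) (j : ι) (g : (∀ i, π i) → ℝ≥0∞) : (∀ i, π i) → ℝ≥0∞ :=
  fun x => (∫⁻ t, g (Function.update x j t) ^ e ∂ μ j) ^ e⁻¹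

lemma nrm_eq (e : ℝ) (j : ι) (g : (∀ i, π i) → ℝ≥0∞) :
    nrm μ e j g = fun x => ((∫⋯∫⁻_{j}, (fun y => g y ^ e) ∂μ) x) ^ e⁻¹ := by
  rw [lmarginal_singleton]
  rfl

lemma nrm_one (j : ι) (g : (∀ i, π i) → ℝ≥0∞) :
    nrm μ 1 j g = ∫⋯∫⁻_{j}, g ∂μ := by
  funext x
  rw [nrm, lmarginal_singleton]
  simp [ENNReal.rpow_one]

lemma nrm_two_sq (j : ι) (g : (∀ i, π i) → ℝ≥0∞) :
    (fun x => nrm μ 2 j g x ^ (2:ℝ)) = ∫⋯∫⁻_{j}, (fun y => g y ^ (2:ℝ)) ∂μ := by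
  rw [nrm_eq, lmarginal_singleton]
  funext x
  rw [← ENNReal.rpow_mul]
  norm_num

lemma measurable_nrm {e : ℝ} {j : ι} {g : (∀ i, π i) → ℝ≥0∞} (hg : Measurable g) :
    Measurable (nrm μ e j g) := by
  rw [nrm_eq]
  exact ((hg.pow_const e).lmarginal μ).pow_const _

/-- Process a list of coordinates, taking the `L^{E j}` norm in coordinate `j`,
with the head of the list innermost. -/
noncomputable def proc (E : ι → ℝ) : List ι → ((∀ i, π i) → ℝ≥0∞) → ((∀ i, π i) → ℝ≥0∞)
  | [], g => g
  | j :: L, g => proc E L (nrm μ (E j) j g)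

/-- Iterated Hölder inequality: integrating out the variables in `L` of a product
`∏ (g α) ^ (θ α)` is bounded by the product of the iterated mixed norms. -/
lemma lmarginal_prod_le_proc {κ : Type*} (A : Finset κ) (θ : κ → ℝ) (E : κ → ι → ℝ)
    (hθ : ∀ α, 0 ≤ θ α) (hE : ∀ α j, E α j = 1 ∨ E α j = 2) :
    ∀ (L : List ι), L.Nodup → (∀ j ∈ L, ∑ α ∈ A, θ α / E α j = 1) →
    ∀ (g : κ → (∀ i, π i) → ℝ≥0∞), (∀ α, Measurable (g α)) →
    (∫⋯∫⁻_L.toFinset, (fun x => ∏ α ∈ A, g α x ^ θ α) ∂μ) ≤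
      fun x => ∏ α ∈ A, proc μ (E α) L (g α) x ^ θ α := by
  intro L
  induction L with
  | nil =>
    intro _ _ g hg
    simp only [List.toFinset_nil, lmarginal_empty]
    exact le_of_eq rfl
  | cons j L' ih =>
    intro hnd hsum g hg
    obtain ⟨hj, hnd'⟩ := List.nodup_cons.mp hnd
    have hins : j ∉ L'.toFinset := fun h => hj (List.mem_toFinset.mp h)
    have hE0 : ∀ α, E α j ≠ 0 := by
      intro α; rcases hE α j with h | h <;> rw [h] <;> norm_num
    have hF : Measurable (fun x => ∏ α ∈ A, g α x ^ θ α) :=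
      Finset.measurable_prod _ fun α _ => (hg α).pow_const _
    rw [List.toFinset_cons, lmarginal_insert' _ hF hins]
    have inner : ∀ x, (∫⁻ t, (∏ α ∈ A, g α (Function.update x j t) ^ θ α) ∂μ j) ≤
        ∏ α ∈ A, nrm μ (E α j) j (g α) x ^ θ α := by
      intro x
      calc ∫⁻ t, (∏ α ∈ A, g α (Function.update x j t) ^ θ α) ∂μ j
          = ∫⁻ t, (∏ α ∈ A, (g α (Function.update x j t) ^ E α j) ^ (θ α / E α j)) ∂μ j := by
            refine lintegral_congr fun t => Finset.prod_congr rfl fun α _ => ?_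
            rw [← ENNReal.rpow_mul, mul_comm (E α j), div_mul_cancel₀ _ (hE0 α)]
        _ ≤ ∏ α ∈ A, (∫⁻ t, g α (Function.update x j t) ^ E α j ∂μ j) ^ (θ α / E α j) := by
            refine ENNReal.lintegral_prod_norm_pow_le A
              (fun α _ => (((hg α).comp (measurable_update x)).pow_const _).aemeasurable)
              (hsum j List.mem_cons_self) (fun α _ => div_nonneg (hθ α) ?_)
            rcases hE α j with h | h <;> rw [h] <;> norm_num
        _ = ∏ α ∈ A, nrm μ (E α j) j (g α) x ^ θ α := by
            refine Finset.prod_congr rfl fun α _ => ?_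
            rw [nrm, ← ENNReal.rpow_mul]
            congr 1
            rw [div_eq_inv_mul]
    calc ∫⋯∫⁻_L'.toFinset,
          (fun x => ∫⁻ t, (∏ α ∈ A, g α (Function.update x j t) ^ θ α) ∂μ j) ∂μ
        ≤ ∫⋯∫⁻_L'.toFinset, (fun x => ∏ α ∈ A, nrm μ (E α j) j (g α) x ^ θ α) ∂μ :=
          lmarginal_mono fun x => inner x
      _ ≤ fun x => ∏ α ∈ A, proc μ (E α) L' (nrm μ (E α j) j (g α)) x ^ θ α :=
          ih hnd' (fun j' hj' => hsum j' (List.mem_cons_of_mem _ hj'))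
            _ (fun α => measurable_nrm μ (hg α))

/-- commuting `update` and `updateFinset` for a coordinate not in the finset -/
lemma update_updateFinset_comm {x : ∀ i, π i} {j : ι} {B : Finset ι} (hj : j ∉ B)
    (t : π j) (b : ∀ i : B, π i) :
    Function.update (updateFinset x B b) j t = updateFinset (Function.update x j t) B b := by
  funext i
  simp only [updateFinset, Function.update]
  by_cases hiB : i ∈ B
  · have : i ≠ j := fun h => hj (h ▸ hiB)
    simp [hiB, this]
  · simp [hiB]

/-- Minkowski swap: the `L²` norm over `B` of an `L¹` norm in coordinate `j` is at most
the `L¹` norm in coordinate `j` of the `L²` norm over `B`. -/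
lemma swap_le {g : (∀ i, π i) → ℝ≥0∞} (hg : Measurable g) {j : ι} {B : Finset ι}
    (hj : j ∉ B) (x : ∀ i, π i) :
    ((∫⋯∫⁻_B, (fun y => ((∫⋯∫⁻_{j}, g ∂μ) y) ^ (2:ℝ)) ∂μ) x) ^ (1/2:ℝ)
      ≤ (∫⋯∫⁻_{j}, (fun y => ((∫⋯∫⁻_B, (fun z => g z ^ (2:ℝ)) ∂μ) y) ^ (1/2:ℝ)) ∂μ) x := by
  rw [lmarginal_singleton, lmarginal_singleton]
  have hmap : Measurable fun p : π j × (∀ i : B, π i) =>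
      updateFinset (Function.update x j p.1) B p.2 := by
    refine measurable_pi_lambda _ (fun i => ?_)
    by_cases hiB : i ∈ B
    · simp only [updateFinset, hiB, dif_pos]
      exact (measurable_pi_apply _).comp measurable_snd
    · simp only [updateFinset, hiB, dif_neg, not_false_iff]
      by_cases hij : i = j
      · subst hij
        simp only [Function.update_self]
        exact measurable_fst
      · simp only [Function.update_of_ne hij]
        exact measurable_const
  have := minkowski_two (μ j) (Measure.pi fun i : B => μ i)
    (fun t b => g (updateFinset (Function.update x j t) B b)) (hg.comp hmap)
  calc ((∫⋯∫⁻_B, (fun y => (∫⁻ t, g (Function.update y j t) ∂μ j) ^ (2:ℝ)) ∂μ) x) ^ (1/2:ℝ)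
      = (∫⁻ b : ∀ i : B, π i, (∫⁻ t, g (updateFinset (Function.update x j t) B b) ∂μ j) ^ (2:ℝ)
          ∂Measure.pi fun i : B => μ i) ^ (1/2:ℝ) := by
        rw [lmarginal]
        congr 1
        refine lintegral_congr fun b => ?_
        congr 1
        refine lintegral_congr fun t => ?_
        rw [update_updateFinset_comm hj]
    _ ≤ ∫⁻ t, (∫⁻ b : ∀ i : B, π i, g (updateFinset (Function.update x j t) B b) ^ (2:ℝ)
          ∂Measure.pi fun i : B => μ i) ^ (1/2:ℝ) ∂μ j := this
    _ = ∫⁻ t, ((∫⋯∫⁻_B, (fun z => g z ^ (2:ℝ)) ∂μ) (Function.update x j t)) ^ (1/2:ℝ) ∂μ j := by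
        refine lintegral_congr fun t => ?_
        rw [lmarginal]

/-- Sorting lemma: the interleaved mixed norm is at most the sorted one
(`L²` over `L.toFinset \ T` inside, `L¹` over `L.toFinset ∩ T` outside). -/
lemma proc_le_sorted (T : Finset ι) :
    ∀ (L : List ι), L.Nodup → ∀ (g : (∀ i, π i) → ℝ≥0∞), Measurable g →
    proc μ (fun j => if j ∈ T then (1:ℝ) else 2) L g ≤
      ∫⋯∫⁻_(L.toFinset ∩ T),
        (fun y => ((∫⋯∫⁻_(L.toFinset \ T), (fun z => g z ^ (2:ℝ)) ∂μ) y) ^ (1/2:ℝ)) ∂μ := by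
  intro L
  induction L with
  | nil =>
    intro _ g hg
    simp only [List.toFinset_nil, Finset.empty_inter, Finset.empty_sdiff, lmarginal_empty]
    intro x
    have hx : (g x ^ (2:ℝ)) ^ (1/2:ℝ) = g x := by
      rw [← ENNReal.rpow_mul]; norm_num
    exact le_of_eq hx.symm
  | cons j L' ih =>
    intro hnd g hg
    obtain ⟨hj, hnd'⟩ := List.nodup_cons.mp hnd
    have hins : j ∉ L'.toFinset := fun h => hj (List.mem_toFinset.mp h)
    have hjA : j ∉ L'.toFinset ∩ T := fun h => hins (Finset.mem_of_mem_inter_left h)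
    have hjB : j ∉ L'.toFinset \ T := fun h => hins (Finset.mem_sdiff.mp h).1
    rw [List.toFinset_cons]
    by_cases hjT : j ∈ T
    · -- exponent 1 : Minkowski swap needed
      have hproc : proc μ (fun j' => if j' ∈ T then (1:ℝ) else 2) (j :: L') g =
          proc μ (fun j' => if j' ∈ T then (1:ℝ) else 2) L' (∫⋯∫⁻_{j}, g ∂μ) := by
        show proc μ _ L' (nrm μ (if j ∈ T then (1:ℝ) else 2) j g) = _
        rw [if_pos hjT, nrm_one]
      rw [hproc, Finset.insert_inter_of_mem hjT, Finset.insert_sdiff_of_mem _ hjT]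
      refine le_trans (ih hnd' _ (hg.lmarginal μ)) ?_
      have hFm : Measurable fun y => ((∫⋯∫⁻_(L'.toFinset \ T),
          (fun z => g z ^ (2:ℝ)) ∂μ) y) ^ (1/2:ℝ) :=
        ((hg.pow_const _).lmarginal μ).pow_const _
      calc ∫⋯∫⁻_(L'.toFinset ∩ T),
            (fun y => ((∫⋯∫⁻_(L'.toFinset \ T),
              (fun z => (∫⋯∫⁻_{j}, g ∂μ) z ^ (2:ℝ)) ∂μ) y) ^ (1/2:ℝ)) ∂μ
          ≤ ∫⋯∫⁻_(L'.toFinset ∩ T),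
            (∫⋯∫⁻_{j}, (fun y => ((∫⋯∫⁻_(L'.toFinset \ T),
              (fun z => g z ^ (2:ℝ)) ∂μ) y) ^ (1/2:ℝ)) ∂μ) ∂μ :=
            lmarginal_mono fun y => swap_le μ hg hjB y
        _ = ∫⋯∫⁻_(insert j (L'.toFinset ∩ T)),
            (fun y => ((∫⋯∫⁻_(L'.toFinset \ T),
              (fun z => g z ^ (2:ℝ)) ∂μ) y) ^ (1/2:ℝ)) ∂μ := by
            rw [Finset.insert_eq, Finset.union_comm,
              lmarginal_union μ _ hFm (Finset.disjoint_singleton_right.mpr hjA)]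
    · -- exponent 2 : absorb into the inner L² marginal
      have hproc : proc μ (fun j' => if j' ∈ T then (1:ℝ) else 2) (j :: L') g =
          proc μ (fun j' => if j' ∈ T then (1:ℝ) else 2) L' (nrm μ 2 j g) := by
        show proc μ _ L' (nrm μ (if j ∈ T then (1:ℝ) else 2) j g) = _
        rw [if_neg hjT]
      rw [hproc, Finset.insert_inter_of_notMem hjT, Finset.insert_sdiff_of_notMem _ hjT]
      refine le_trans (ih hnd' _ (measurable_nrm μ hg)) ?_
      refine le_of_eq ?_
      congr 1
      funext y
      congr 1
      rw [nrm_two_sq, ← lmarginal_union μ _ (hg.pow_const _)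
        (Finset.disjoint_singleton_right.mpr hjB), Finset.union_comm, ← Finset.insert_eq]

end Blei


/-- number of `K`-subsets (as enumerated by `S`) containing a fixed index -/
lemma blei_count {J K N : ℕ} (hK : 0 < K) (hKJ : K < J) (hN : N = J.choose K)
    (S : Fin N → Finset (Fin J)) (hcard : ∀ α, (S α).card = K)
    (henum : ∀ s : Finset (Fin J), s.card = K → ∃! α : Fin N, S α = s) (j : Fin J) :
    (Finset.univ.filter (fun α : Fin N => j ∈ S α)).card = (J-1).choose (K-1) := by
  classical
  have key : (Finset.univ.filter (fun α : Fin N => j ∈ S α)).card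
      = ((Finset.univ.erase j).powersetCard (K-1)).card := by
    apply Finset.card_bij (fun α _ => (S α).erase j)
    · intro α hα
      simp only [Finset.mem_filter, Finset.mem_univ, true_and] at hα
      rw [Finset.mem_powersetCard]
      refine ⟨fun i hi => ?_, ?_⟩
      · rw [Finset.mem_erase] at hi
        exact Finset.mem_erase.mpr ⟨hi.1, Finset.mem_univ i⟩
      · rw [Finset.card_erase_of_mem hα, hcard]
    · intro α hα β hβ h
      simp only [Finset.mem_filter, Finset.mem_univ, true_and] at hα hβ
      have hS : S β = S α := by
        rw [← Finset.insert_erase hα, ← Finset.insert_erase hβ, h]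
      obtain ⟨γ, -, huniq⟩ := henum (S α) (hcard α)
      rw [huniq α rfl, huniq β hS]
    · intro t ht
      rw [Finset.mem_powersetCard] at ht
      have hjt : j ∉ t := fun h => (Finset.mem_erase.mp (ht.1 h)).1 rfl
      have hcard' : (insert j t).card = K := by
        rw [Finset.card_insert_of_notMem hjt, ht.2]
        omega
      obtain ⟨α, hα, -⟩ := henum (insert j t) hcard'
      refine ⟨α, ?_, ?_⟩
      · simp only [Finset.mem_filter, Finset.mem_univ, true_and]
        rw [hα]
        exact Finset.mem_insert_self _ _
      · rw [hα, Finset.erase_insert hjt]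
  rw [key, Finset.card_powersetCard, Finset.card_erase_of_mem (Finset.mem_univ j),
    Finset.card_univ, Fintype.card_fin]

/-- Combine a point of `∏_{j ∈ E} X j` and a point of `∏_{j ∈ Eᶜ} X j` into a point of
the full product `∏ j, X j`. -/
def glue {n : ℕ} {X : Fin n → Type*} (E : Finset (Fin n))
    (a : ∀ j : E, X j) (b : ∀ j : (Eᶜ : Finset (Fin n)), X j) : ∀ j, X j :=
  fun j => if h : j ∈ E then a ⟨j, h⟩ else b ⟨j, Finset.mem_compl.mpr h⟩

/-- Generalized Blei inequality with exponents 1 and 2: with `S₁, …, S_N` enumerating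
the `K`-element subsets of `{1, …, J}` (`N = C(J,K)`, `0 < K < J`),
`(∫ |f|^{2J/(K+J)})^{(K+J)/(2J)} ≤ ∏_α [∫_{S_α} (∫_{∼S_α} |f|²)^{1/2}]^{1/N}`,
where `∫_E` denotes integration over `∏_{k ∈ E} X_k` with the product measure. -/
theorem blei_one_two {J K N : ℕ} (hK : 0 < K) (hKJ : K < J) (hN : N = J.choose K)
    (S : Fin N → Finset (Fin J)) (hcard : ∀ α, (S α).card = K)
    (henum : ∀ s : Finset (Fin J), s.card = K → ∃! α : Fin N, S α = s)
    {X : Fin J → Type*} [∀ j, MeasurableSpace (X j)]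
    (μ : ∀ j, Measure (X j)) [∀ j, SigmaFinite (μ j)]
    (f : (∀ j, X j) → ℝ≥0∞) (hf : Measurable f) :
    (∫⁻ x, f x ^ ((2 * J : ℝ) / ((K : ℝ) + J)) ∂(Measure.pi μ)) ^
        (((K : ℝ) + J) / (2 * J : ℝ)) ≤
      ∏ α : Fin N,
        (∫⁻ a : ∀ j : S α, X j,
            (∫⁻ b : ∀ j : ((S α)ᶜ : Finset (Fin J)), X j,
                f (glue (S α) a b) ^ (2 : ℝ)
              ∂(Measure.pi fun j : ((S α)ᶜ : Finset (Fin J)) => μ j)) ^ (1 / 2 : ℝ)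
          ∂(Measure.pi fun j : S α => μ j)) ^ ((1 : ℝ) / N) := by
  classical
  have hN0 : 0 < N := hN ▸ Nat.choose_pos hKJ.le
  have hJ0 : (0:ℝ) < (J:ℝ) := by exact_mod_cast hK.trans hKJ
  have hKJpos : (0:ℝ) < (K:ℝ) + (J:ℝ) := by positivity
  have hN' : (0:ℝ) < (N:ℝ) := by exact_mod_cast hN0
  set p : ℝ := (2 * J : ℝ) / ((K : ℝ) + J) with hp
  set q : ℝ := ((K : ℝ) + J) / (2 * J : ℝ) with hq
  have hp0 : 0 < p := by rw [hp]; positivity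
  have hq0 : (0:ℝ) ≤ q := by rw [hq]; positivity
  have hpq : p * q = 1 := by rw [hp, hq]; field_simp
  rcases isEmpty_or_nonempty (∀ j, X j) with hemp | hne
  · rw [lintegral_of_isEmpty, ENNReal.zero_rpow_of_pos (by rw [hq] at hq0 ⊢; positivity)]
    exact zero_le
  obtain ⟨x₀⟩ := hne
  -- notation: the exponent pattern and weights
  set E : Fin N → Fin J → ℝ := fun α j => if j ∈ S α then (1:ℝ) else 2 with hE
  set θ : Fin N → ℝ := fun _ => p / N with hθ
  -- the target partial-integral quantities, in `lmarginal` form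
  set M : Fin N → ℝ≥0∞ := fun α =>
    (∫⋯∫⁻_(S α), (fun y => ((∫⋯∫⁻_((S α)ᶜ), (fun z => f z ^ (2:ℝ)) ∂μ) y) ^ (1/2:ℝ)) ∂μ) x₀
    with hM
  -- identification of the RHS factors with `M`
  have hMα : ∀ α : Fin N,
      (∫⁻ a : ∀ j : S α, X j,
          (∫⁻ b : ∀ j : ((S α)ᶜ : Finset (Fin J)), X j,
              f (glue (S α) a b) ^ (2 : ℝ)
            ∂(Measure.pi fun j : ((S α)ᶜ : Finset (Fin J)) => μ j)) ^ (1 / 2 : ℝ)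
        ∂(Measure.pi fun j : S α => μ j)) = M α := by
    intro α
    rw [hM]
    simp only [lmarginal]
    refine lintegral_congr fun a => ?_
    congr 1
    refine lintegral_congr fun b => ?_
    congr 2
    funext j
    by_cases hjS : j ∈ S α
    · have hjc : j ∉ (S α)ᶜ := by simp [hjS]
      simp [glue, updateFinset, hjS, hjc]
    · have hjc : j ∈ (S α)ᶜ := Finset.mem_compl.mpr hjS
      simp [glue, updateFinset, hjS, hjc]
  -- counting: the Hölder exponent condition in each coordinate
  have hNK : J * ((J-1).choose (K-1)) = N * K := by
    have h1 : J - 1 + 1 = J := Nat.succ_pred_eq_of_pos (hK.trans hKJ)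
    have h2 : K - 1 + 1 = K := Nat.succ_pred_eq_of_pos hK
    have hs := Nat.add_one_mul_choose_eq (J-1) (K-1)
    rw [h1, h2] at hs
    rw [hs, hN]
  have hsum : ∀ j : Fin J, ∑ α : Fin N, θ α / E α j = 1 := by
    intro j
    set c := (Finset.univ.filter (fun α : Fin N => j ∈ S α)).card with hc
    set c' := (Finset.univ.filter (fun α : Fin N => ¬ j ∈ S α)).card with hc'
    have hcJ : (J:ℝ) * (c:ℝ) = (N:ℝ) * (K:ℝ) := by
      have : J * c = N * K := by
        rw [hc, blei_count hK hKJ hN S hcard henum j]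
        exact hNK
      exact_mod_cast this
    have hcc : (c:ℝ) + (c':ℝ) = (N:ℝ) := by
      have : c + c' = N := by
        rw [hc, hc', Finset.card_filter_add_card_filter_not,
          Finset.card_univ, Fintype.card_fin]
      exact_mod_cast this
    calc ∑ α : Fin N, θ α / E α j
        = ∑ α : Fin N, (if j ∈ S α then (p/(N:ℝ))/1 else (p/(N:ℝ))/2) := by
          refine Finset.sum_congr rfl fun α _ => ?_
          by_cases hjα : j ∈ S α <;> simp [hE, hθ, hjα]
      _ = (c:ℝ) * ((p/(N:ℝ))/1) + (c':ℝ) * ((p/(N:ℝ))/2) := by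
          rw [Finset.sum_ite, Finset.sum_const, Finset.sum_const, nsmul_eq_mul, nsmul_eq_mul]
      _ = 1 := by
          have hc'' : (c':ℝ) = (N:ℝ) - (c:ℝ) := by linarith
          rw [hc'', hp]
          field_simp
          linear_combination hcJ
  -- the main estimate
  have hfp : (fun x => f x ^ p) = fun x => ∏ α : Fin N, f x ^ θ α := by
    funext x
    rw [hθ]
    simp only [Finset.prod_const, Finset.card_univ, Fintype.card_fin]
    rw [← ENNReal.rpow_natCast (f x ^ (p / (N:ℝ))), ← ENNReal.rpow_mul]
    congr 1
    field_simp
  set L : List (Fin J) := (Finset.univ : Finset (Fin J)).toList with hL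
  have hnd : L.Nodup := Finset.nodup_toList _
  have htoF : L.toFinset = Finset.univ := Finset.toList_toFinset _
  have claim2 : (∫⁻ x, f x ^ p ∂(Measure.pi μ)) ≤ ∏ α : Fin N, M α ^ θ α := by
    have step1 := lmarginal_prod_le_proc μ (Finset.univ : Finset (Fin N)) θ E
      (fun α => by rw [hθ]; positivity)
      (fun α j => by rw [hE]; by_cases hjα : j ∈ S α <;> simp [hjα])
      L hnd (fun j _ => hsum j) (fun _ => f) (fun _ => hf)
    rw [htoF] at step1
    have step2 : ∀ α : Fin N, proc μ (E α) L f x₀ ≤ M α := by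
      intro α
      have h := proc_le_sorted μ (S α) L hnd f hf
      rw [htoF, Finset.univ_inter] at h
      have hcompl : Finset.univ \ S α = (S α)ᶜ := (Finset.compl_eq_univ_sdiff (S α)).symm
      rw [hcompl] at h
      have h' := h x₀
      rw [hM]
      convert h' using 2
    calc (∫⁻ x, f x ^ p ∂(Measure.pi μ))
        = (∫⋯∫⁻_Finset.univ, (fun x => ∏ α : Fin N, f x ^ θ α) ∂μ) x₀ := by
          rw [← hfp, lintegral_eq_lmarginal_univ x₀]
      _ ≤ ∏ α : Fin N, proc μ (E α) L f x₀ ^ θ α := step1 x₀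
      _ ≤ ∏ α : Fin N, M α ^ θ α := by
          refine Finset.prod_le_prod' fun α _ => ?_
          exact ENNReal.rpow_le_rpow (step2 α) (by rw [hθ]; positivity)
  -- conclusion
  calc (∫⁻ x, f x ^ p ∂(Measure.pi μ)) ^ q
      ≤ (∏ α : Fin N, M α ^ θ α) ^ q := ENNReal.rpow_le_rpow claim2 hq0
    _ = ∏ α : Fin N, (M α ^ θ α) ^ q := (ENNReal.prod_rpow_of_nonneg hq0).symm
    _ = ∏ α : Fin N, M α ^ ((1:ℝ) / N) := by
        refine Finset.prod_congr rfl fun α _ => ?_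
        rw [← ENNReal.rpow_mul]
        congr 1
        rw [hθ, div_mul_eq_mul_div, hpq]
    _ = ∏ α : Fin N,
        (∫⁻ a : ∀ j : S α, X j,
            (∫⁻ b : ∀ j : ((S α)ᶜ : Finset (Fin J)), X j,
                f (glue (S α) a b) ^ (2 : ℝ)
              ∂(Measure.pi fun j : ((S α)ᶜ : Finset (Fin J)) => μ j)) ^ (1 / 2 : ℝ)
          ∂(Measure.pi fun j : S α => μ j)) ^ ((1 : ℝ) / N) := by
        refine Finset.prod_congr rfl fun α _ => ?_
        rw [hMα α]
end

section
/- Popa–Sinnamon inequality, first form: let n ≥ 2 and let q₁,…,qₙ be positive, possibly infinite, exponents with Σ_{j=1}^n 1/qⱼ ≤ 1. Define pⱼ by 1/pⱼ = 1/qⱼ + 1 − Σ_{k=1}^n 1/q_k. Then for any σ-finite measure spaces (M₁,μ₁),…,(Mₙ,μₙ) and any nonnegative measurable functions f₁,…,fₙ on the product Mⁿ = ∏_{k=1}^n M_k, ∫_{Mⁿ} f₁⋯fₙ dμⁿ ≤ ∏_{j=1}^n ( ∫_{M_j} ( ∫_{Mⁿⱼ} fⱼ^{qⱼ} dμⁿⱼ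 )^{pⱼ/qⱼ} dμⱼ )^{1/pⱼ}, where Mⁿⱼ = ∏_{k≠j} M_k with measure μⁿⱼ = ∏_{k≠j} μ_k. -/
open MeasureTheory
open scoped ENNReal

/-- Combine a point `t` of `M j` and a point of `∏_{k ≠ j} M k` into a point of the
full product `∏ k, M k`. -/
def glueAt {n : ℕ} {M : Fin n → Type*} (j : Fin n) (t : M j)
    (y : ∀ k : {k : Fin n // k ≠ j}, M k) : ∀ k, M k :=
  fun k => if h : k = j then cast (congrArg M h.symm) t else y ⟨k, h⟩

/-- The `L^p` "norm" (for `0 < p ≤ ∞`) of a nonnegative function, the exponent `∞`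
being interpreted as the essential supremum. -/
noncomputable def eNorm {α : Type*} [MeasurableSpace α] (μ : Measure α) (p : ℝ≥0∞)
    (g : α → ℝ≥0∞) : ℝ≥0∞ :=
  if p = ∞ then essSup g μ else (∫⁻ a, g a ^ p.toReal ∂μ) ^ (1 / p.toReal)

section Infra

variable {n : ℕ} {M : Fin n → Type*} [∀ k, MeasurableSpace (M k)] (j : Fin n)

/-- Split off the `j`ᵗʰ coordinate. -/
def splitAt (x : ∀ k, M k) : M j × ∀ k : {k : Fin n // k ≠ j}, M k :=
  (x j, fun k => x k)

omit [∀ k, MeasurableSpace (M k)] in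
theorem glueAt_splitAt (x : ∀ k, M k) : glueAt j (x j) (fun k => x k) = x := by
  funext k
  by_cases h : k = j
  · subst h
    show dite _ _ _ = _
    rw [dif_pos rfl]
    exact eq_of_heq (cast_heq _ _)
  · simp only [glueAt, dif_neg h]

omit [∀ k, MeasurableSpace (M k)] in
theorem splitAt_glueAt (t : M j) (y : ∀ k : {k : Fin n // k ≠ j}, M k) :
    splitAt j (glueAt j t y) = (t, y) := by
  refine Prod.ext ?_ ?_
  · show dite _ _ _ = _
    rw [dif_pos rfl]
    exact eq_of_heq (cast_heq _ _)
  · funext k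
    simp only [splitAt, glueAt, dif_neg k.2]

theorem measurable_splitAt : Measurable (splitAt (M := M) j) :=
  Measurable.prod (measurable_pi_apply j) (measurable_pi_lambda _ fun k => measurable_pi_apply _)

theorem measurable_glueAt :
    Measurable fun z : M j × ∀ k : {k : Fin n // k ≠ j}, M k => glueAt j z.1 z.2 := by
  apply measurable_pi_lambda
  intro k
  by_cases h : k = j
  · subst h
    have : (fun z : M k × ∀ k' : {k' : Fin n // k' ≠ k}, M k' => glueAt k z.1 z.2 k)
        = fun z => z.1 := by
      funext z
      show dite _ _ _ = _
      rw [dif_pos rfl]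
      exact eq_of_heq (cast_heq _ _)
    rw [this]; exact measurable_fst
  · have : (fun z : M j × ∀ k' : {k' : Fin n // k' ≠ j}, M k' => glueAt j z.1 z.2 k)
        = fun z => z.2 ⟨k, h⟩ := by
      funext z
      simp only [glueAt, dif_neg h]
    rw [this]
    exact (measurable_pi_apply _).comp measurable_snd

variable (μ : ∀ k, Measure (M k)) [∀ k, SigmaFinite (μ k)]

instance uniqueSubtypeEqFin : Unique {k : Fin n // k = j} :=
  ⟨⟨⟨j, rfl⟩⟩, by rintro ⟨k, rfl⟩; rfl⟩

theorem measurePreserving_splitAt :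
    MeasurePreserving (splitAt (M := M) j) (Measure.pi μ)
      ((μ j).prod (Measure.pi fun k : {k : Fin n // k ≠ j} => μ k)) := by
  classical
  have h1 := measurePreserving_piEquivPiSubtypeProd μ (fun k => k = j)
  have h2 : MeasurePreserving
      (Prod.map (MeasurableEquiv.piUnique (fun k : {k : Fin n // k = j} => M k)) id)
      ((Measure.pi fun k : {k : Fin n // k = j} => μ k).prod
        (Measure.pi fun k : {k : Fin n // ¬ k = j} => μ k))
      ((μ j).prod (Measure.pi fun k : {k : Fin n // k ≠ j} => μ k)) :=
    (measurePreserving_piUnique (fun k : {k : Fin n // k = j} => μ k)).prod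
      (MeasurePreserving.id _)
  rw [Subsingleton.elim (Fintype.subtypeEq j) (Subtype.fintype fun k => k = j)] at h2
  exact h2.comp h1

/-- Transfer an a.e. statement from the split product to the full product. -/
theorem ae_pi_of_ae_prod {P : M j → (∀ k : {k : Fin n // k ≠ j}, M k) → Prop}
    (h : ∀ᵐ z ∂((μ j).prod (Measure.pi fun k : {k : Fin n // k ≠ j} => μ k)), P z.1 z.2) :
    ∀ᵐ x ∂Measure.pi μ, P (x j) (fun k => x k) :=
  ae_of_ae_map (measurable_splitAt j).aemeasurable
    (by rwa [(measurePreserving_splitAt j μ).map_eq])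

/-- Fubini: integrate the `j`ᵗʰ coordinate last. -/
theorem lintegral_splitAt {φ : (∀ k, M k) → ℝ≥0∞} (hφ : Measurable φ) :
    ∫⁻ x, φ x ∂Measure.pi μ =
      ∫⁻ t, ∫⁻ y, φ (glueAt j t y) ∂(Measure.pi fun k : {k : Fin n // k ≠ j} => μ k) ∂μ j := by
  have hg : Measurable fun z : M j × ∀ k : {k : Fin n // k ≠ j}, M k => φ (glueAt j z.1 z.2) :=
    hφ.comp (measurable_glueAt j)
  have h1 : ∫⁻ x, φ x ∂Measure.pi μ = ∫⁻ z, φ (glueAt j z.1 z.2)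
      ∂((μ j).prod (Measure.pi fun k : {k : Fin n // k ≠ j} => μ k)) := by
    rw [← (measurePreserving_splitAt j μ).lintegral_comp hg]
    apply lintegral_congr; intro x
    exact (congrArg φ (glueAt_splitAt j x)).symm
  rw [h1, lintegral_prod _ hg.aemeasurable]

end Infra

/-- Fubini for a product of coordinate functions over a finite product measure. -/
theorem lintegral_pi_prod : ∀ {n : ℕ} {M : Fin n → Type u} [∀ k, MeasurableSpace (M k)]
    (μ : ∀ k, Measure (M k)) [∀ k, SigmaFinite (μ k)] (h : ∀ k, M k → ℝ≥0∞)
    (_ : ∀ k, Measurable (h k)),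
    ∫⁻ x, ∏ k, h k (x k) ∂Measure.pi μ = ∏ k, ∫⁻ t, h k t ∂μ k := by
  intro n
  induction n with
  | zero =>
    intro M _ μ _ h hm
    simp [lintegral_const, Measure.pi_univ]
  | succ m ih =>
    intro M _ μ _ h hm
    have e := measurePreserving_piFinSuccAbove μ 0
    have hG : Measurable fun z : M 0 × ∀ k : Fin m, M ((0 : Fin (m+1)).succAbove k) =>
        h 0 z.1 * ∏ k : Fin m, h _ (z.2 k) :=
      ((hm 0).comp measurable_fst).mul
        (Finset.measurable_prod _ fun k _ => (hm _).comp ((measurable_pi_apply k).comp measurable_snd))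
    calc ∫⁻ x, ∏ k, h k (x k) ∂Measure.pi μ
        = ∫⁻ x, h 0 (x 0) * ∏ k : Fin m, h _ (x ((0 : Fin (m+1)).succAbove k)) ∂Measure.pi μ := by
          apply lintegral_congr; intro x
          exact Fin.prod_univ_succAbove (fun k => h k (x k)) 0
      _ = ∫⁻ z, h 0 z.1 * ∏ k : Fin m, h _ (z.2 k)
            ∂((μ 0).prod (Measure.pi fun k => μ ((0 : Fin (m+1)).succAbove k))) := by
          rw [← e.lintegral_comp hG]; rfl
      _ = (∫⁻ t, h 0 t ∂μ 0) * ∏ k : Fin m, ∫⁻ t, h _ t ∂μ ((0 : Fin (m+1)).succAbove k) := by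
          have hgm : Measurable fun y : ∀ k : Fin m, M ((0 : Fin (m+1)).succAbove k) =>
              ∏ k : Fin m, h _ (y k) :=
            Finset.measurable_prod _ fun k _ => (hm _).comp (measurable_pi_apply k)
          rw [lintegral_prod_mul (hm 0).aemeasurable hgm.aemeasurable,
            ih _ _ (fun k => hm _)]
      _ = ∏ k, ∫⁻ t, h k t ∂μ k := (Fin.prod_univ_succAbove (fun k => ∫⁻ t, h k t ∂μ k) 0).symm

theorem essSup_eq_iSup_rat {β : Type*} [MeasurableSpace β] (ν : Measure β) (h : β → ℝ≥0∞) :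
    essSup h ν = ⨆ r : ℚ, if ν {y | ENNReal.ofReal r < h y} ≠ 0 then ENNReal.ofReal r else 0 := by
  apply le_antisymm
  · set S := ⨆ r : ℚ, if ν {y | ENNReal.ofReal r < h y} ≠ 0 then ENNReal.ofReal r else 0 with hS
    refine essSup_le_of_ae_le S ?_
    rw [Filter.EventuallyLE, ae_iff]
    have hsub : {y | ¬ h y ≤ S} ⊆
        ⋃ r : ℚ, {y | ENNReal.ofReal r < h y ∧ ν {y' | ENNReal.ofReal r < h y'} = 0} := by
      intro y hy
      simp only [Set.mem_setOf_eq, not_le] at hy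
      obtain ⟨r, -, hr1, hr2⟩ := (ENNReal.lt_iff_exists_rat_btwn).1 hy
      refine Set.mem_iUnion.2 ⟨r, ?_, ?_⟩
      · simpa [ENNReal.ofReal] using hr2
      · by_contra hne
        have : ENNReal.ofReal r ≤ S := by
          refine le_trans ?_ (le_iSup _ r)
          rw [if_pos hne]
        rw [ENNReal.ofReal] at this
        exact absurd (lt_of_le_of_lt this hr1) (lt_irrefl _)
    refine measure_mono_null hsub (measure_iUnion_null fun r => ?_)
    by_cases hr : ν {y' | ENNReal.ofReal r < h y'} = 0
    · exact measure_mono_null (fun y hy => hy.1) hr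
    · convert measure_empty (μ := ν)
      ext y; simp only [Set.mem_setOf_eq, Set.mem_empty_iff_false, iff_false]
      rintro ⟨-, h2⟩; exact hr h2
  · refine iSup_le fun r => ?_
    split_ifs with hr
    · by_contra hlt
      push_neg at hlt
      apply hr
      refine measure_mono_null (fun y hy => ?_) (ae_iff.1 (ENNReal.ae_le_essSup (μ := ν) h))
      simp only [Set.mem_setOf_eq, not_le] at hy ⊢
      exact lt_trans hlt hy
    · exact zero_le

theorem measurable_essSup_param {α β : Type*} [MeasurableSpace α] [MeasurableSpace β]
    (ν : Measure β) [SFinite ν] {F : α → β → ℝ≥0∞} (hF : Measurable (Function.uncurry F)) :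
    Measurable fun t => essSup (F t) ν := by
  have : (fun t => essSup (F t) ν)
      = fun t => ⨆ r : ℚ, if ν {y | ENNReal.ofReal r < F t y} ≠ 0 then ENNReal.ofReal r else 0 := by
    funext t; exact essSup_eq_iSup_rat ν (F t)
  rw [this]
  refine Measurable.iSup fun r => ?_
  have hms : Measurable fun t => ν {y | ENNReal.ofReal r < F t y} := by
    have hset : MeasurableSet {p : α × β | ENNReal.ofReal r < Function.uncurry F p} :=
      measurableSet_lt measurable_const hF
    exact measurable_measure_prodMk_left hset
  exact Measurable.ite (hms (MeasurableSet.singleton 0).compl) measurable_const measurable_const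

theorem ae_prod_of_forall_ae {β γ : Type*} [MeasurableSpace β] [MeasurableSpace γ]
    (μ : Measure β) (ν : Measure γ) [SFinite ν] {P : β × γ → Prop}
    (hP : MeasurableSet {z | P z}) (h : ∀ᵐ t ∂μ, ∀ᵐ y ∂ν, P (t, y)) :
    ∀ᵐ z ∂μ.prod ν, P z := by
  rw [ae_iff]
  have hc : MeasurableSet {z : β × γ | ¬ P z} := hP.compl
  rw [Measure.prod_apply hc]
  have hae : ∀ᵐ t ∂μ, ν (Prod.mk t ⁻¹' {z : β × γ | ¬ P z}) = 0 := by
    filter_upwards [h] with t ht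
    exact ae_iff.1 ht
  calc ∫⁻ t, ν (Prod.mk t ⁻¹' {z : β × γ | ¬ P z}) ∂μ = ∫⁻ _, 0 ∂μ := lintegral_congr_ae hae
    _ = 0 := lintegral_zero

/-- An auxiliary rpow inequality. -/
theorem rpow_mul_rpow_le (z : ℝ≥0∞) {u v : ℝ} (hu : 0 < u) (hv : v ≤ 0) (huv : 0 < u + v) :
    z ^ u * z ^ v ≤ z ^ (u + v) := by
  rcases eq_or_ne z 0 with rfl | hz0
  · rw [ENNReal.zero_rpow_of_pos hu, zero_mul]
    exact zero_le
  rcases eq_or_ne z ⊤ with rfl | hztop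
  · rcases eq_or_lt_of_le hv with rfl | hv'
    · simp
    · rw [ENNReal.top_rpow_of_neg hv', mul_zero]
      exact zero_le
  · rw [← ENNReal.rpow_add u v hz0 hztop]

/-- Popa–Sinnamon inequality, first form: for `n ≥ 2` and exponents `q₁, …, qₙ ∈ (0,∞]`
with `Σ 1/qⱼ ≤ 1`, setting `1/pⱼ = 1/qⱼ + 1 − Σ 1/q_k`, one has
`∫ f₁ ⋯ fₙ ≤ ∏ⱼ (∫_{M_j} (∫_{Mⁿⱼ} fⱼ^{qⱼ})^{pⱼ/qⱼ} dμⱼ)^{1/pⱼ}`, where the inner norm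
is over all the variables except the `j`ᵗʰ and the outer norm over the `j`ᵗʰ, with `∞`
exponents interpreted as essential suprema. -/
theorem popa_sinnamon_first {n : ℕ} (hn : 2 ≤ n) {M : Fin n → Type*}
    [∀ k, MeasurableSpace (M k)] (μ : ∀ k, Measure (M k)) [∀ k, SigmaFinite (μ k)]
    (q : Fin n → ℝ≥0∞) (hq : ∀ j, 0 < q j) (hq1 : ∑ k : Fin n, (q k)⁻¹ ≤ 1)
    (f : Fin n → (∀ k, M k) → ℝ≥0∞) (hf : ∀ j, Measurable (f j)) :
    ∫⁻ x, ∏ j : Fin n, f j x ∂(Measure.pi μ) ≤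
      ∏ j : Fin n,
        eNorm (μ j) ((q j)⁻¹ + (1 - ∑ k : Fin n, (q k)⁻¹))⁻¹
          (fun t => eNorm (Measure.pi fun k : {k : Fin n // k ≠ j} => μ k) (q j)
            (fun y => f j (glueAt j t y))) := by
  classical
  set r : ℝ≥0∞ := ∑ k : Fin n, (q k)⁻¹ with hrdef
  set ν : ∀ j : Fin n, Measure (∀ k : {k : Fin n // k ≠ j}, M k) :=
    fun j => Measure.pi fun k : {k : Fin n // k ≠ j} => μ k with hνdef
  set g : ∀ j : Fin n, M j → ℝ≥0∞ := fun j t =>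
    eNorm (ν j) (q j) (fun y => f j (glueAt j t y)) with hgdef
  show ∫⁻ x, ∏ j : Fin n, f j x ∂(Measure.pi μ) ≤
      ∏ j : Fin n, eNorm (μ j) ((q j)⁻¹ + (1 - r))⁻¹ (g j)
  -- basic exponent facts
  have hqine : ∀ j, (q j)⁻¹ ≠ ∞ := fun j => by simp [(hq j).ne']
  have hrne : r ≠ ∞ := fun h => by simp [h] at hq1
  set Pj : Fin n → ℝ≥0∞ := fun j => (q j)⁻¹ + (1 - r) with hPjdef
  have hPjne : ∀ j, Pj j ≠ ∞ := fun j =>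
    ENNReal.add_ne_top.2 ⟨hqine j, (lt_of_le_of_lt tsub_le_self ENNReal.one_lt_top).ne⟩
  set w : Fin n → ℝ := fun j => ((q j)⁻¹).toReal with hwdef
  set w' : ℝ := (1 - r).toReal with hw'def
  set W : Fin n → ℝ := fun j => w j + w' with hWdef
  have hw_nonneg : ∀ j, 0 ≤ w j := fun j => ENNReal.toReal_nonneg
  have hw'_nonneg : 0 ≤ w' := ENNReal.toReal_nonneg
  have hWPj : ∀ j, (Pj j).toReal = W j := fun j =>
    ENNReal.toReal_add (hqine j) ((lt_of_le_of_lt tsub_le_self ENNReal.one_lt_top).ne)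
  have hsum : ∑ j, w j + w' = 1 := by
    have h1 : ∑ j, w j = r.toReal := (ENNReal.toReal_sum (fun i _ => hqine i)).symm
    have h2 : w' = 1 - r.toReal := by
      rw [hw'def, ENNReal.toReal_sub_of_le hq1 ENNReal.one_ne_top, ENNReal.toReal_one]
    rw [h1, h2]; ring
  have hW_pos : ∀ j, Pj j ≠ 0 → 0 < W j := fun j h => by
    rw [← hWPj j]; exact ENNReal.toReal_pos h (hPjne j)
  have hqR_pos : ∀ j, q j ≠ ∞ → 0 < (q j).toReal := fun j h =>
    ENNReal.toReal_pos (hq j).ne' h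
  have hwq : ∀ j, q j ≠ ∞ → w j * (q j).toReal = 1 := fun j h => by
    rw [hwdef]; simp only [ENNReal.toReal_inv]
    exact inv_mul_cancel₀ (hqR_pos j h).ne'
  have hPj_ne0_of_qfin : ∀ j, q j ≠ ∞ → Pj j ≠ 0 := fun j h => by
    simp only [hPjdef, ne_eq, add_eq_zero, ENNReal.inv_eq_zero, not_and_or]
    exact Or.inl h
  have hw0_of_qtop : ∀ j, q j = ∞ → w j = 0 := fun j h => by simp [hwdef, h]
  have hPj0 : ∀ j, Pj j = 0 → q j = ∞ ∧ w' = 0 ∧ w j = 0 := by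
    intro j h
    rw [hPjdef] at h
    simp only [add_eq_zero, ENNReal.inv_eq_zero] at h
    exact ⟨h.1, by rw [hw'def, h.2]; simp, by simp [hwdef, h.1]⟩
  -- p j as it appears in the goal
  have hp_toReal : ∀ j, ((Pj j)⁻¹).toReal = (W j)⁻¹ := fun j => by
    rw [ENNReal.toReal_inv, hWPj j]
  set pR : Fin n → ℝ := fun j => (W j)⁻¹ with hpRdef
  have hpR_nonneg : ∀ j, 0 ≤ pR j := fun j =>
    inv_nonneg.2 (by rw [hWdef]; positivity)
  have hpRW : ∀ j, Pj j ≠ 0 → pR j * W j = 1 := fun j h =>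
    inv_mul_cancel₀ (hW_pos j h).ne'
  have hpR_pos : ∀ j, Pj j ≠ 0 → 0 < pR j := fun j h => inv_pos.2 (hW_pos j h)
  -- measurability of g
  have hFm : ∀ j, Measurable fun z : M j × ∀ k : {k : Fin n // k ≠ j}, M k =>
      f j (glueAt j z.1 z.2) := fun j => (hf j).comp (measurable_glueAt j)
  have hgm : ∀ j, Measurable (g j) := by
    intro j
    by_cases hqt : q j = ∞
    · have : g j = fun t => essSup (fun y => f j (glueAt j t y)) (ν j) := by
        funext t; rw [hgdef]; simp [eNorm, hqt]
      rw [this]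
      exact measurable_essSup_param (ν j) (hFm j)
    · have : g j = fun t =>
          (∫⁻ y, f j (glueAt j t y) ^ (q j).toReal ∂ν j) ^ (1 / (q j).toReal) := by
        funext t; rw [hgdef]; simp [eNorm, hqt]
      rw [this]
      exact (Measurable.lintegral_prod_right ((hFm j).pow_const _)).pow_const _
  have hg_pow : ∀ j, q j ≠ ∞ → ∀ t, ∫⁻ y, f j (glueAt j t y) ^ (q j).toReal ∂ν j
      = g j t ^ (q j).toReal := by
    intro j hqt t
    have h1 : g j t = (∫⁻ y, f j (glueAt j t y) ^ (q j).toReal ∂ν j) ^ (1 / (q j).toReal) := by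
      rw [hgdef]; simp [eNorm, hqt]
    rw [h1, ← ENNReal.rpow_mul, one_div, inv_mul_cancel₀ (hqR_pos j hqt).ne', ENNReal.rpow_one]
  -- a.e. facts on the full product
  have hae1 : ∀ j, q j = ∞ → ∀ᵐ x ∂Measure.pi μ, f j x ≤ g j (x j) := by
    intro j hqt
    have hmeas : MeasurableSet {z : M j × ∀ k : {k : Fin n // k ≠ j}, M k |
        f j (glueAt j z.1 z.2) ≤ g j z.1} :=
      measurableSet_le (hFm j) ((hgm j).comp measurable_fst)
    have hprod : ∀ᵐ z ∂((μ j).prod (ν j)), f j (glueAt j z.1 z.2) ≤ g j z.1 := by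
      refine ae_prod_of_forall_ae (μ j) (ν j) hmeas (Filter.Eventually.of_forall fun t => ?_)
      have h1 : g j t = essSup (fun y => f j (glueAt j t y)) (ν j) := by
        rw [hgdef]; simp [eNorm, hqt]
      show ∀ᵐ y ∂ν j, f j (glueAt j t y) ≤ g j t
      rw [h1]
      exact ENNReal.ae_le_essSup _
    have h2 := ae_pi_of_ae_prod j μ (P := fun t y => f j (glueAt j t y) ≤ g j t) hprod
    filter_upwards [h2] with x hx
    rwa [glueAt_splitAt j x] at hx
  have hae2 : ∀ j, q j ≠ ∞ → ∀ᵐ x ∂Measure.pi μ, g j (x j) = 0 → f j x = 0 := by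
    intro j hqt
    have hmeas : MeasurableSet {z : M j × ∀ k : {k : Fin n // k ≠ j}, M k |
        g j z.1 = 0 → f j (glueAt j z.1 z.2) = 0} := by
      have hset : {z : M j × ∀ k : {k : Fin n // k ≠ j}, M k |
          g j z.1 = 0 → f j (glueAt j z.1 z.2) = 0}
          = {z | g j z.1 = 0}ᶜ ∪ {z | f j (glueAt j z.1 z.2) = 0} := by
        ext z; simp [imp_iff_not_or]
      rw [hset]
      exact (((hgm j).comp measurable_fst) (measurableSet_singleton 0)).compl.union
        ((hFm j) (measurableSet_singleton 0))
    have hprod : ∀ᵐ z ∂((μ j).prod (ν j)), g j z.1 = 0 → f j (glueAt j z.1 z.2) = 0 := by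
      refine ae_prod_of_forall_ae (μ j) (ν j) hmeas (Filter.Eventually.of_forall fun t => ?_)
      show ∀ᵐ y ∂ν j, g j t = 0 → f j (glueAt j t y) = 0
      by_cases h0 : g j t = 0
      · have hFty : Measurable fun y => f j (glueAt j t y) :=
          (hFm j).comp measurable_prodMk_left
        have hint : ∫⁻ y, f j (glueAt j t y) ^ (q j).toReal ∂ν j = 0 := by
          rw [hg_pow j hqt t, h0, ENNReal.zero_rpow_of_pos (hqR_pos j hqt)]
        have hz := (lintegral_eq_zero_iff (hFty.pow_const _)).1 hint
        filter_upwards [hz] with y hy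
        intro _
        simp only [Pi.zero_apply] at hy
        rcases ENNReal.rpow_eq_zero_iff.1 hy with ⟨h1, -⟩ | ⟨-, h2⟩
        · exact h1
        · exact absurd h2 (not_lt.2 (hqR_pos j hqt).le)
      · exact Filter.Eventually.of_forall fun y h => absurd h h0
    have h2 := ae_pi_of_ae_prod j μ
      (P := fun t y => g j t = 0 → f j (glueAt j t y) = 0) hprod
    filter_upwards [h2] with x hx
    rwa [glueAt_splitAt j x] at hx
  have htransfer : ∀ j (Q : M j → Prop), MeasurableSet {t | Q t} → (∀ᵐ t ∂μ j, Q t) →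
      ∀ᵐ x ∂Measure.pi μ, Q (x j) := by
    intro j Q hQm hQ
    have hmeas : MeasurableSet {z : M j × ∀ k : {k : Fin n // k ≠ j}, M k | Q z.1} :=
      measurable_fst hQm
    have hprod : ∀ᵐ z ∂((μ j).prod (ν j)), Q z.1 := by
      refine ae_prod_of_forall_ae (μ j) (ν j) hmeas ?_
      filter_upwards [hQ] with t ht
      exact Filter.Eventually.of_forall fun y => ht
    exact ae_pi_of_ae_prod j μ (P := fun t _ => Q t) hprod
  have hae3 : ∀ j, ∀ᵐ x ∂Measure.pi μ, g j (x j) ≤ essSup (g j) (μ j) := by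
    intro j
    exact htransfer j _ (measurableSet_le (hgm j) measurable_const)
      (ENNReal.ae_le_essSup (g j))
  have hae4 : ∀ j, Pj j ≠ 0 → (∫⁻ t, g j t ^ pR j ∂μ j) ≠ ∞ →
      ∀ᵐ x ∂Measure.pi μ, g j (x j) ≠ ∞ := by
    intro j hPjne0 hint
    refine htransfer j _ ((hgm j) (measurableSet_singleton ∞)).compl ?_
    filter_upwards [ae_lt_top ((hgm j).pow_const (pR j)) hint] with t ht
    exact ((ENNReal.rpow_lt_top_iff_of_pos (hpR_pos j hPjne0)).1 ht).ne
  show ∫⁻ x, ∏ j : Fin n, f j x ∂(Measure.pi μ) ≤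
      ∏ j : Fin n, eNorm (μ j) (Pj j)⁻¹ (g j)
  have hEnorm_eq : ∀ j, eNorm (μ j) (Pj j)⁻¹ (g j) =
      if Pj j = 0 then essSup (g j) (μ j) else (∫⁻ t, g j t ^ pR j ∂μ j) ^ W j := by
    intro j
    by_cases h0 : Pj j = 0
    · rw [if_pos h0, eNorm, if_pos (by simp [h0])]
    · rw [if_neg h0, eNorm, if_neg (by simp [h0])]
      simp only [hp_toReal j]
      rw [one_div, inv_inv]
  by_cases hzero : ∃ j0, eNorm (μ j0) (Pj j0)⁻¹ (g j0) = 0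
  · -- some factor vanishes: the left-hand side is zero
    obtain ⟨j0, hj0⟩ := hzero
    have hg0 : ∀ᵐ t ∂μ j0, g j0 t = 0 := by
      rw [hEnorm_eq j0] at hj0
      by_cases h0 : Pj j0 = 0
      · rw [if_pos h0] at hj0
        filter_upwards [ENNReal.essSup_eq_zero_iff.1 hj0] with t ht
        simpa using ht
      · rw [if_neg h0] at hj0
        have hint : ∫⁻ t, g j0 t ^ pR j0 ∂μ j0 = 0 := by
          rcases ENNReal.rpow_eq_zero_iff.1 hj0 with ⟨h1, -⟩ | ⟨-, h2⟩
          · exact h1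
          · exact absurd h2 (not_lt.2 (hW_pos j0 h0).le)
        have hz := (lintegral_eq_zero_iff ((hgm j0).pow_const _)).1 hint
        filter_upwards [hz] with t ht
        simp only [Pi.zero_apply] at ht
        rcases ENNReal.rpow_eq_zero_iff.1 ht with ⟨h1, -⟩ | ⟨-, h2⟩
        · exact h1
        · exact absurd h2 (not_lt.2 (hpR_pos j0 h0).le)
    have hf0 : ∀ᵐ x ∂Measure.pi μ, f j0 x = 0 := by
      have hgx0 : ∀ᵐ x ∂Measure.pi μ, g j0 (x j0) = 0 :=
        htransfer j0 _ ((hgm j0) (measurableSet_singleton 0)) hg0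
      by_cases hqt : q j0 = ∞
      · filter_upwards [hae1 j0 hqt, hgx0] with x h1 h2
        exact le_antisymm (h2 ▸ h1) (zero_le)
      · filter_upwards [hae2 j0 hqt, hgx0] with x h1 h2
        exact h1 h2
    have hlhs : ∫⁻ x, ∏ j : Fin n, f j x ∂(Measure.pi μ) = 0 := by
      rw [← lintegral_zero]
      apply lintegral_congr_ae
      filter_upwards [hf0] with x hx
      exact Finset.prod_eq_zero (Finset.mem_univ j0) hx
    rw [hlhs]
    exact zero_le
  push_neg at hzero
  by_cases htop : ∃ j0, eNorm (μ j0) (Pj j0)⁻¹ (g j0) = ∞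
  · -- some factor is infinite (and none vanish): the right-hand side is infinite
    obtain ⟨j0, hj0⟩ := htop
    have hrhs : ∏ j : Fin n, eNorm (μ j) (Pj j)⁻¹ (g j) = ∞ := by
      rw [← Finset.mul_prod_erase Finset.univ _ (Finset.mem_univ j0), hj0]
      exact ENNReal.top_mul (Finset.prod_ne_zero_iff.2 fun j _ => hzero j)
    rw [hrhs]
    exact le_top
  push_neg at htop
  -- Case III: every factor is finite
  have hIfin : ∀ j, Pj j ≠ 0 → (∫⁻ t, g j t ^ pR j ∂μ j) ≠ ∞ := by
    intro j h0 hI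
    have h1 := htop j
    rw [hEnorm_eq j, if_neg h0, hI] at h1
    exact h1 (ENNReal.top_rpow_of_pos (hW_pos j h0))
  set cst : Fin n → ℝ≥0∞ := fun j => if Pj j = 0 then essSup (g j) (μ j) else 1 with hcstdef
  set Hol : Option (Fin n) → (∀ k, M k) → ℝ≥0∞ := fun o => Option.elim o
    (fun x => ∏ j, g j (x j) ^ pR j)
    (fun j x => (f j x * g j (x j) ^ (pR j * w j - 1)) ^ (q j).toReal) with hHoldef
  set wt : Option (Fin n) → ℝ := fun o => Option.elim o w' w with hwtdef
  have hgx_m : ∀ j, Measurable fun x : ∀ k, M k => g j (x j) :=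
    fun j => (hgm j).comp (measurable_pi_apply j)
  have hHol_m : ∀ o, Measurable (Hol o) := by
    rintro (_ | j)
    · exact Finset.measurable_prod _ fun j _ => (hgx_m j).pow_const _
    · exact ((hf j).mul ((hgx_m j).pow_const _)).pow_const _
  have hwt_sum : ∑ o : Option (Fin n), wt o = 1 := by
    rw [univ_option, Finset.sum_insertNone]
    show w' + ∑ j, w j = 1
    rw [add_comm]; exact hsum
  have hwt_nonneg : ∀ o, 0 ≤ wt o := by
    rintro (_ | j)
    · exact hw'_nonneg
    · exact hw_nonneg j
  have hw'_pos_of_B : ∀ j, q j = ∞ → Pj j ≠ 0 → pR j * w' = 1 := by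
    intro j hqt h0
    have hwj0 : w j = 0 := hw0_of_qtop j hqt
    have hWj : W j = w' := by rw [hWdef]; simp [hwj0]
    have hw'ne : w' ≠ 0 := fun h => (hW_pos j h0).ne' (by rw [hWj, h])
    rw [hpRdef]
    simp only [hWj]
    exact inv_mul_cancel₀ hw'ne
  -- the master pointwise bound
  have hmaster : ∫⁻ x, ∏ j : Fin n, f j x ∂(Measure.pi μ) ≤
      (∏ j, cst j) * ∫⁻ x, ∏ o : Option (Fin n), Hol o x ^ wt o ∂(Measure.pi μ) := by
    rw [← lintegral_const_mul _ (Finset.measurable_prod _ fun o _ => (hHol_m o).pow_const _)]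
    apply lintegral_mono_ae
    have hA : ∀ᵐ x ∂Measure.pi μ, ∀ j, q j = ∞ → f j x ≤ g j (x j) := by
      rw [ae_all_iff]
      intro j
      by_cases hqt : q j = ∞
      · filter_upwards [hae1 j hqt] with x hx; exact fun _ => hx
      · exact Filter.Eventually.of_forall fun x h => absurd h hqt
    have hB : ∀ᵐ x ∂Measure.pi μ, ∀ j, q j ≠ ∞ →
        (g j (x j) = 0 → f j x = 0) ∧ g j (x j) ≠ ∞ := by
      rw [ae_all_iff]
      intro j
      by_cases hqt : q j = ∞
      · exact Filter.Eventually.of_forall fun x h => absurd hqt h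
      · have h0 := hPj_ne0_of_qfin j hqt
        filter_upwards [hae2 j hqt, hae4 j h0 (hIfin j h0)] with x h1 h2
        exact fun _ => ⟨h1, h2⟩
    have hC : ∀ᵐ x ∂Measure.pi μ, ∀ j, g j (x j) ≤ essSup (g j) (μ j) :=
      ae_all_iff.2 hae3
    filter_upwards [hA, hB, hC] with x hxA hxB hxC
    have hperj : ∀ j, f j x ≤ cst j *
        (((f j x * g j (x j) ^ (pR j * w j - 1)) ^ (q j).toReal) ^ w j
          * g j (x j) ^ (pR j * w')) := by
      intro j
      by_cases h0 : Pj j = 0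
      · obtain ⟨hqt, hw'0, hwj0⟩ := hPj0 j h0
        have h1 : (q j).toReal = 0 := by rw [hqt]; rfl
        rw [hcstdef]
        simp only [if_pos h0, h1, ENNReal.rpow_zero, ENNReal.one_rpow, hw'0, mul_zero,
          one_mul, mul_one]
        exact le_trans (hxA j hqt) (hxC j)
      · rw [hcstdef]; simp only [if_neg h0, one_mul]
        by_cases hqt : q j = ∞
        · have hwj0 : w j = 0 := hw0_of_qtop j hqt
          rw [hwj0, ENNReal.rpow_zero, one_mul, hw'_pos_of_B j hqt h0, ENNReal.rpow_one]
          exact hxA j hqt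
        · have h2 : (((f j x * g j (x j) ^ (pR j * w j - 1)) ^ (q j).toReal) ^ w j)
              = f j x * g j (x j) ^ (pR j * w j - 1) := by
            rw [← ENNReal.rpow_mul, mul_comm (q j).toReal (w j), hwq j hqt, ENNReal.rpow_one]
          rw [h2]
          rcases eq_or_ne (g j (x j)) 0 with hg0 | hg0
          · rw [(hxB j hqt).1 hg0]
            exact zero_le
          · have hgtop := (hxB j hqt).2
            have h3 : g j (x j) ^ (pR j * w j - 1) * g j (x j) ^ (pR j * w')
                = 1 := by
              rw [← ENNReal.rpow_add _ _ hg0 hgtop]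
              have : pR j * w j - 1 + pR j * w' = 0 := by
                have h4 := hpRW j h0
                rw [hWdef] at h4
                linear_combination h4
              rw [this, ENNReal.rpow_zero]
            rw [mul_assoc, h3, mul_one]
    calc ∏ j, f j x ≤ ∏ j, (cst j *
          (((f j x * g j (x j) ^ (pR j * w j - 1)) ^ (q j).toReal) ^ w j
            * g j (x j) ^ (pR j * w'))) := Finset.prod_le_prod' fun j _ => hperj j
      _ = (∏ j, cst j) * ∏ o : Option (Fin n), Hol o x ^ wt o := by
          have h5 : (∏ j, g j (x j) ^ pR j) ^ w' = ∏ j, g j (x j) ^ (pR j * w') := by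
            rw [← ENNReal.prod_rpow_of_nonneg hw'_nonneg]
            exact Finset.prod_congr rfl fun j _ => by rw [← ENNReal.rpow_mul]
          have h6 : ∏ o : Option (Fin n), Hol o x ^ wt o
              = (∏ j, g j (x j) ^ pR j) ^ w' *
                ∏ j, ((f j x * g j (x j) ^ (pR j * w j - 1)) ^ (q j).toReal) ^ w j := by
            rw [univ_option, Finset.prod_insertNone]
            rfl
          rw [h6, h5, Finset.prod_mul_distrib, Finset.prod_mul_distrib,
            mul_comm (∏ j, (((f j x * g j (x j) ^ (pR j * w j - 1)) ^ (q j).toReal) ^ w j))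
              (∏ j, g j (x j) ^ (pR j * w'))]
  -- Hölder's inequality
  have hHolder : ∫⁻ x, ∏ o : Option (Fin n), Hol o x ^ wt o ∂(Measure.pi μ) ≤
      ∏ o : Option (Fin n), (∫⁻ x, Hol o x ∂(Measure.pi μ)) ^ wt o :=
    ENNReal.lintegral_prod_norm_pow_le _ (fun o _ => (hHol_m o).aemeasurable) hwt_sum
      (fun o _ => hwt_nonneg o)
  set I : Fin n → ℝ≥0∞ := fun j => ∫⁻ t, g j t ^ pR j ∂μ j with hIdef
  have hglue_j : ∀ (j : Fin n) (t : M j) (y : ∀ k : {k : Fin n // k ≠ j}, M k),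
      glueAt j t y j = t := fun j t y => congrArg Prod.fst (splitAt_glueAt j t y)
  have hHolsome : ∀ j, (∫⁻ x, Hol (some j) x ∂(Measure.pi μ)) ^ w j ≤ I j ^ w j := by
    intro j
    by_cases hqt : q j = ∞
    · rw [hw0_of_qtop j hqt]
      simp [ENNReal.rpow_zero]
    · refine ENNReal.rpow_le_rpow ?_ (hw_nonneg j)
      have hqR := hqR_pos j hqt
      have hwjpos : 0 < w j := by
        rw [hwdef]; simp only [ENNReal.toReal_inv]; exact inv_pos.2 hqR
      have hpRle : pR j ≤ (q j).toReal := by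
        have h1 : (w j)⁻¹ = (q j).toReal := by
          rw [hwdef]; simp only [ENNReal.toReal_inv, inv_inv]
        rw [hpRdef, ← h1]
        apply inv_anti₀ hwjpos
        rw [hWdef]
        show w j ≤ w j + w'
        linarith [hw'_nonneg]
      calc ∫⁻ x, Hol (some j) x ∂(Measure.pi μ)
          = ∫⁻ t, ∫⁻ y, (f j (glueAt j t y) *
              g j (glueAt j t y j) ^ (pR j * w j - 1)) ^ (q j).toReal ∂ν j ∂μ j :=
            lintegral_splitAt j μ (hHol_m (some j))
        _ = ∫⁻ t, (∫⁻ y, f j (glueAt j t y) ^ (q j).toReal ∂ν j) *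
              (g j t ^ (pR j * w j - 1)) ^ (q j).toReal ∂μ j := by
            apply lintegral_congr fun t => ?_
            have hFty : Measurable fun y => f j (glueAt j t y) ^ (q j).toReal :=
              ((hFm j).comp measurable_prodMk_left).pow_const _
            rw [← lintegral_mul_const _ hFty]
            apply lintegral_congr fun y => ?_
            rw [hglue_j j t y, ENNReal.mul_rpow_of_nonneg _ _ ENNReal.toReal_nonneg]
        _ = ∫⁻ t, g j t ^ (q j).toReal * g j t ^ ((pR j * w j - 1) * (q j).toReal) ∂μ j := by
            apply lintegral_congr fun t => ?_
            rw [hg_pow j hqt t, ← ENNReal.rpow_mul]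
        _ ≤ ∫⁻ t, g j t ^ pR j ∂μ j := by
            apply lintegral_mono fun t => ?_
            have hkey : (q j).toReal + (pR j * w j - 1) * (q j).toReal = pR j := by
              have h1 := hwq j hqt
              linear_combination pR j * h1
            have hneg : (pR j * w j - 1) * (q j).toReal ≤ 0 := by nlinarith [hpRle, hqR]
            have := rpow_mul_rpow_le (g j t) hqR hneg (by rw [hkey]; exact hpR_pos j (hPj_ne0_of_qfin j hqt))
            rwa [hkey] at this
  have hHolnone : (∫⁻ x, Hol none x ∂(Measure.pi μ)) ^ w' ≤ ∏ j, I j ^ w' := by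
    by_cases hw'0 : w' = 0
    · simp [hw'0, ENNReal.rpow_zero]
    · have h1 : ∫⁻ x, Hol none x ∂(Measure.pi μ) = ∏ j, I j :=
        lintegral_pi_prod μ (fun j t => g j t ^ pR j) (fun j => (hgm j).pow_const _)
      rw [h1, ← ENNReal.prod_rpow_of_nonneg hw'_nonneg]
  -- per-factor identification with the right-hand side
  have hperfactor : ∀ j, cst j * (I j ^ w j * I j ^ w') = eNorm (μ j) (Pj j)⁻¹ (g j) := by
    intro j
    rw [hEnorm_eq j]
    by_cases h0 : Pj j = 0
    · obtain ⟨hqt, hw'0, hwj0⟩ := hPj0 j h0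
      rw [if_pos h0, hcstdef]
      simp only [if_pos h0, hwj0, hw'0, ENNReal.rpow_zero, mul_one]
    · rw [if_neg h0, hcstdef]
      simp only [if_neg h0, one_mul]
      rw [← ENNReal.rpow_add_of_nonneg (w j) w' (hw_nonneg j) hw'_nonneg]
  -- putting things together
  calc ∫⁻ x, ∏ j : Fin n, f j x ∂(Measure.pi μ)
      ≤ (∏ j, cst j) * ∫⁻ x, ∏ o : Option (Fin n), Hol o x ^ wt o ∂(Measure.pi μ) := hmaster
    _ ≤ (∏ j, cst j) * ∏ o : Option (Fin n), (∫⁻ x, Hol o x ∂(Measure.pi μ)) ^ wt o :=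
        mul_le_mul_right hHolder _
    _ ≤ ∏ j : Fin n, eNorm (μ j) (Pj j)⁻¹ (g j) := by
        have h1 : ∏ o : Option (Fin n), (∫⁻ x, Hol o x ∂(Measure.pi μ)) ^ wt o
            = (∫⁻ x, Hol none x ∂(Measure.pi μ)) ^ w' *
              ∏ j, (∫⁻ x, Hol (some j) x ∂(Measure.pi μ)) ^ w j := by
          rw [univ_option, Finset.prod_insertNone]
          rfl
        rw [h1]
        calc (∏ j, cst j) * ((∫⁻ x, Hol none x ∂(Measure.pi μ)) ^ w' *
              ∏ j, (∫⁻ x, Hol (some j) x ∂(Measure.pi μ)) ^ w j)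
            ≤ (∏ j, cst j) * ((∏ j, I j ^ w') * ∏ j, I j ^ w j) :=
              mul_le_mul_right (mul_le_mul' hHolnone (Finset.prod_le_prod' fun j _ => hHolsome j)) _
          _ = ∏ j, (cst j * (I j ^ w j * I j ^ w')) := by
              rw [Finset.prod_mul_distrib, Finset.prod_mul_distrib]
              ring
          _ = ∏ j : Fin n, eNorm (μ j) (Pj j)⁻¹ (g j) :=
              Finset.prod_congr rfl fun j _ => hperfactor j
end

section
/- Combined Blei–Popa–Sinnamon inequality: let (X₁,μ₁),…,(Xₙ,μₙ) be σ-finite measure spaces with product (X,μ). Let 0 < k < n, M = C(n,k), and let S₁,…,S_M enumerate the size-k subsets of {1,…,n}. Let q₁,…,q_M be positive, possibly infinite, exponents with Σ_{i=1}^M 1/qᵢ ≤ 1, and set ε = 1 − Σ_{i=1}^M 1/qᵢ ≥ 0. Let c₁,…,c_M be nonnegative numbers such that for each j ∈ {1,…,n}, Σ_{i : Sᵢ ∋ j} cᵢ = 1, and define pᵢ by 1/pᵢ = 1/qᵢ + cᵢ ε. Then for any nonnegative measurable functions f₁,…,f_M on X, ∫_X f₁⋯f_M dμ ≤ ∏_{i=1}^M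 ( ∫_{Sᵢ} ( ∫_{∼Sᵢ} fᵢ^{qᵢ} )^{pᵢ/qᵢ} )^{1/pᵢ}, where ∼Sᵢ = {1,…,n} \ Sᵢ and, for E ⊂ {1,…,n}, ∫_E denotes integration over ∏_{j∈E} Xⱼ with the product of the measures μⱼ, j ∈ E. -/
open MeasureTheory
open scoped ENNReal NNReal

section Helpers

open Function

namespace BPS

/-- `x^a * x^b ≤ x^(a+b)` in `ℝ≥0∞`, for arbitrary real exponents. -/
lemma rpow_mul_rpow_le (x : ℝ≥0∞) (a b : ℝ) : x ^ a * x ^ b ≤ x ^ (a + b) := by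
  rcases eq_or_ne x 0 with rfl | hx0
  · rcases lt_trichotomy a 0 with ha | rfl | ha
    · rcases lt_trichotomy b 0 with hb | rfl | hb
      · rw [ENNReal.zero_rpow_of_neg ha, ENNReal.zero_rpow_of_neg hb,
          ENNReal.zero_rpow_of_neg (by linarith)]
        simp
      · simp
      · rw [ENNReal.zero_rpow_of_pos hb]; simp
    · simp
    · rw [ENNReal.zero_rpow_of_pos ha]; simp
  rcases eq_or_ne x ∞ with rfl | hxt
  · rcases lt_trichotomy a 0 with ha | rfl | ha
    · rw [ENNReal.top_rpow_of_neg ha]; simp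
    · simp
    · rcases lt_trichotomy b 0 with hb | rfl | hb
      · rw [ENNReal.top_rpow_of_neg hb]; simp
      · simp
      · rw [ENNReal.top_rpow_of_pos ha, ENNReal.top_rpow_of_pos hb,
          ENNReal.top_rpow_of_pos (by linarith)]
        simp
  · exact le_of_eq (ENNReal.rpow_add _ _ hx0 hxt).symm

/-- Parametric measurability of the essential supremum. -/
lemma measurable_essSup_param {α β : Type*} [MeasurableSpace α] [MeasurableSpace β]
    (ν : Measure β) [SFinite ν] {h : α → β → ℝ≥0∞}
    (hh : Measurable (Function.uncurry h)) :
    Measurable fun a => essSup (h a) ν := by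
  simp_rw [fun a => essSup_eq_sInf ν (h a)]
  apply measurable_of_Iio
  intro t
  have hset : (fun a => sInf {c | ν {b | c < h a b} = 0}) ⁻¹' Set.Iio t =
      ⋃ q : ℚ, {a | ((Real.toNNReal q : ℝ≥0∞) < t ∧
        ν {b | (Real.toNNReal q : ℝ≥0∞) < h a b} = 0)} := by
    ext a
    simp only [Set.mem_preimage, Set.mem_Iio, Set.mem_iUnion, Set.mem_setOf_eq]
    constructor
    · intro hlt
      obtain ⟨c, hc, hct⟩ := sInf_lt_iff.1 hlt
      obtain ⟨qq, -, hcq, hqt⟩ := ENNReal.lt_iff_exists_rat_btwn.1 hct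
      exact ⟨qq, hqt, measure_mono_null (fun b hb => lt_trans hcq hb) hc⟩
    · rintro ⟨qq, hqt, hq0⟩
      exact lt_of_le_of_lt (sInf_le hq0) hqt
  rw [hset]
  refine MeasurableSet.iUnion fun qq => ?_
  by_cases hqt : (Real.toNNReal qq : ℝ≥0∞) < t
  · simp only [hqt, true_and]
    have hs : MeasurableSet {p : α × β | (Real.toNNReal qq : ℝ≥0∞) < Function.uncurry h p} :=
      measurableSet_lt measurable_const hh
    have : Measurable fun a => ν (Prod.mk a ⁻¹' {p : α × β |
        (Real.toNNReal qq : ℝ≥0∞) < Function.uncurry h p}) :=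
      measurable_measure_prodMk_left hs
    exact this (measurableSet_singleton 0)
  · simp only [hqt, false_and]
    exact MeasurableSet.empty

variable {δ : Type*} [DecidableEq δ] {π : δ → Type*} [∀ i, MeasurableSpace (π i)]

/-- `g` depends only on the coordinates in `E`. -/
def DepOn (g : (∀ i, π i) → ℝ≥0∞) (E : Finset δ) : Prop :=
  ∀ ⦃x y : ∀ i, π i⦄, (∀ j ∈ E, x j = y j) → g x = g y

lemma DepOn.updateFinset_eq {g : (∀ i, π i) → ℝ≥0∞} {E s : Finset δ} (hg : DepOn g E)
    (hs : Disjoint E s) (x : ∀ i, π i) (y : ∀ i : s, π i) :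
    g (updateFinset x s y) = g x := by
  refine hg fun j hj => ?_
  rw [updateFinset]
  exact dif_neg (Finset.disjoint_left.1 hs hj)

lemma DepOn.update_eq {g : (∀ i, π i) → ℝ≥0∞} {E : Finset δ} (hg : DepOn g E)
    {j : δ} (hj : j ∉ E) (x : ∀ i, π i) (y : π j) :
    g (Function.update x j y) = g x := by
  refine hg fun j' hj' => ?_
  have hne : j' ≠ j := fun h => hj (h ▸ hj')
  exact Function.update_of_ne hne _ _

lemma DepOn.rpow {g : (∀ i, π i) → ℝ≥0∞} {E : Finset δ} (hg : DepOn g E) (r : ℝ) :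
    DepOn (fun x => g x ^ r) E := fun x y hxy => by dsimp only; rw [hg hxy]

lemma DepOn.lmarginal {μ : ∀ i, Measure (π i)} {g : (∀ i, π i) → ℝ≥0∞} {E : Finset δ}
    (hg : DepOn g E) (s : Finset δ) : DepOn (∫⋯∫⁻_s, g ∂μ) E := by
  intro x y hxy
  refine lintegral_congr fun z => hg fun j hj => ?_
  simp only [updateFinset]
  split_ifs
  · rfl
  · exact hxy j hj

lemma lmarginal_mul_depOn {μ : ∀ i, Measure (π i)} {g h : (∀ i, π i) → ℝ≥0∞} {E s : Finset δ}
    (hg : DepOn g E) (hh : Measurable h) (hEs : Disjoint E s) (x : ∀ i, π i) :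
    (∫⋯∫⁻_s, (fun z => g z * h z) ∂μ) x = g x * (∫⋯∫⁻_s, h ∂μ) x := by
  rw [MeasureTheory.lmarginal]
  simp_rw [hg.updateFinset_eq hEs]
  rw [lintegral_const_mul]
  · rfl
  · exact hh.comp measurable_updateFinset

open Finset

/-- Finner's inequality, in `lmarginal` form. -/
lemma finner_lemma {δ : Type*} [DecidableEq δ] {π : δ → Type*} [∀ i, MeasurableSpace (π i)]
    (μ : ∀ i, Measure (π i)) [∀ i, SigmaFinite (μ i)]
    {ι : Type*} [DecidableEq ι] (I : Finset ι) (S : ι → Finset δ) (G : ι → (∀ i, π i) → ℝ≥0∞)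
    (hG : ∀ i ∈ I, Measurable (G i)) (hdep : ∀ i ∈ I, DepOn (G i) (S i))
    (t : ι → ℝ) (ht : ∀ i ∈ I, 0 ≤ t i) (A : Finset δ) :
    ∀ (_ : ∀ j ∈ A, ∑ i ∈ I.filter (fun i => j ∈ S i), t i = 1) (x : ∀ i, π i),
      (∫⋯∫⁻_A, (fun y => ∏ i ∈ I, G i y ^ t i) ∂μ) x ≤
        ∏ i ∈ I, ((∫⋯∫⁻_(A ∩ S i), G i ∂μ) x) ^ t i := by
  classical
  have hmeas : Measurable fun y => ∏ i ∈ I, G i y ^ t i :=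
    Finset.measurable_prod _ fun i hi =>
      (ENNReal.continuous_rpow_const.measurable).comp (hG i hi)
  induction A using Finset.induction_on with
  | empty =>
    intro _ x
    simp only [lmarginal_empty, Finset.empty_inter]
    exact le_of_eq rfl
  | @insert j A hj ih =>
    intro htA x
    have htA' : ∀ j' ∈ A, ∑ i ∈ I.filter (fun i => j' ∈ S i), t i = 1 :=
      fun j' hj' => htA j' (Finset.mem_insert_of_mem hj')
    rw [lmarginal_insert _ hmeas hj]
    have step1 : ∫⁻ y, (∫⋯∫⁻_A, (fun z => ∏ i ∈ I, G i z ^ t i) ∂μ) (update x j y) ∂μ j ≤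
        ∫⁻ y, ∏ i ∈ I, ((∫⋯∫⁻_(A ∩ S i), G i ∂μ) (update x j y)) ^ t i ∂μ j :=
      lintegral_mono fun y => ih htA' (update x j y)
    refine step1.trans ?_
    have hsplit : ∀ y, ∏ i ∈ I, ((∫⋯∫⁻_(A ∩ S i), G i ∂μ) (update x j y)) ^ t i =
        (∏ i ∈ I.filter (fun i => ¬ j ∈ S i), ((∫⋯∫⁻_(A ∩ S i), G i ∂μ) x) ^ t i) *
        ∏ i ∈ I.filter (fun i => j ∈ S i),
          ((∫⋯∫⁻_(A ∩ S i), G i ∂μ) (update x j y)) ^ t i := by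
      intro y
      rw [mul_comm, ← Finset.prod_filter_mul_prod_filter_not I (fun i => j ∈ S i)]
      congr 1
      refine Finset.prod_congr rfl fun i hi => ?_
      obtain ⟨hiI, hiS⟩ := Finset.mem_filter.1 hi
      rw [((hdep i hiI).lmarginal (A ∩ S i)).update_eq hiS]
    simp_rw [hsplit]
    rw [lintegral_const_mul]
    swap
    · exact Finset.measurable_prod _ fun i hi =>
        (ENNReal.continuous_rpow_const.measurable).comp
          (((hG i (Finset.mem_filter.1 hi).1).lmarginal μ).comp (measurable_update x))
    have holder : ∫⁻ y, ∏ i ∈ I.filter (fun i => j ∈ S i),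
          ((∫⋯∫⁻_(A ∩ S i), G i ∂μ) (update x j y)) ^ t i ∂μ j ≤
        ∏ i ∈ I.filter (fun i => j ∈ S i),
          (∫⁻ y, (∫⋯∫⁻_(A ∩ S i), G i ∂μ) (update x j y) ∂μ j) ^ t i := by
      refine ENNReal.lintegral_prod_norm_pow_le _ (fun i hi => ?_)
        (htA j (Finset.mem_insert_self j A)) (fun i hi => ht i (Finset.mem_filter.1 hi).1)
      exact (((hG i (Finset.mem_filter.1 hi).1).lmarginal μ).comp
        (measurable_update x)).aemeasurable
    refine (mul_le_mul_right holder _).trans (le_of_eq ?_)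
    rw [mul_comm, ← Finset.prod_filter_mul_prod_filter_not I (fun i => j ∈ S i)]
    congr 1
    · refine Finset.prod_congr rfl fun i hi => ?_
      obtain ⟨hiI, hiS⟩ := Finset.mem_filter.1 hi
      have hins : insert j A ∩ S i = insert j (A ∩ S i) := Finset.insert_inter_of_mem hiS
      rw [hins, lmarginal_insert _ (hG i hiI) (fun h => hj (Finset.mem_of_mem_inter_left h))]
    · refine Finset.prod_congr rfl fun i hi => ?_
      obtain ⟨hiI, hiS⟩ := Finset.mem_filter.1 hi
      rw [Finset.insert_inter_of_notMem hiS]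

variable {n : ℕ} {X : Fin n → Type*} [∀ j, MeasurableSpace (X j)]

/-- The inner norm of the statement, as a function on the full product space. -/
noncomputable def innerF (μ : ∀ j, Measure (X j)) (E : Finset (Fin n)) (q : ℝ≥0∞)
    (f : (∀ j, X j) → ℝ≥0∞) (x : ∀ j, X j) : ℝ≥0∞ :=
  eNorm (Measure.pi fun j : (Eᶜ : Finset (Fin n)) => μ j) q
    (fun b => f (updateFinset x Eᶜ b))

lemma innerF_depOn (μ : ∀ j, Measure (X j)) (E : Finset (Fin n)) (q : ℝ≥0∞)
    (f : (∀ j, X j) → ℝ≥0∞) : DepOn (innerF μ E q f) E := by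
  intro x y hxy
  unfold innerF
  congr 1
  funext b
  congr 1
  funext j
  simp only [updateFinset]
  split_ifs with h
  · rfl
  · exact hxy j (by simpa using h)

lemma innerF_eq_lmarginal (μ : ∀ j, Measure (X j)) (E : Finset (Fin n)) {q : ℝ≥0∞}
    (hq : q ≠ ∞) (f : (∀ j, X j) → ℝ≥0∞) :
    innerF μ E q f = fun x =>
      ((∫⋯∫⁻_Eᶜ, (fun z => f z ^ q.toReal) ∂μ) x) ^ (1 / q.toReal) := by
  funext x
  rw [innerF, eNorm, if_neg hq]
  rfl

lemma measurable_uncurry_updateFinset (μ : ∀ j, Measure (X j)) (E : Finset (Fin n))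
    {f : (∀ j, X j) → ℝ≥0∞} (hf : Measurable f) :
    Measurable (Function.uncurry fun (x : ∀ j, X j) (b : ∀ j : (Eᶜ : Finset (Fin n)), X j) =>
      f (updateFinset x Eᶜ b)) := by
  refine hf.comp ?_
  rw [measurable_pi_iff]
  intro j
  by_cases hj : j ∈ (Eᶜ : Finset (Fin n))
  · simpa [updateFinset, hj, Function.uncurry] using
      (measurable_pi_iff.1 measurable_snd) (⟨j, hj⟩ : (Eᶜ : Finset (Fin n)))
  · simpa [updateFinset, hj, Function.uncurry] using (measurable_pi_iff.1 measurable_fst) j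

lemma measurable_innerF (μ : ∀ j, Measure (X j)) [∀ j, SigmaFinite (μ j)]
    (E : Finset (Fin n)) (q : ℝ≥0∞) {f : (∀ j, X j) → ℝ≥0∞} (hf : Measurable f) :
    Measurable (innerF μ E q f) := by
  rcases eq_or_ne q ∞ with rfl | hq
  · unfold innerF eNorm
    simp only [if_pos rfl]
    exact measurable_essSup_param _ (measurable_uncurry_updateFinset μ E hf)
  · rw [innerF_eq_lmarginal μ E hq]
    exact (ENNReal.continuous_rpow_const.measurable).comp
      ((ENNReal.continuous_rpow_const.measurable.comp hf).lmarginal μ)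

lemma glue_eq_updateFinset {n : ℕ} {X : Fin n → Type*} (E : Finset (Fin n)) (x₀ : ∀ j, X j)
    (a : ∀ j : E, X j) (b : ∀ j : (Eᶜ : Finset (Fin n)), X j) :
    glue E a b = updateFinset (updateFinset x₀ E a) Eᶜ b := by
  funext j
  simp only [glue, updateFinset]
  by_cases hj : j ∈ E
  · rw [dif_pos hj, dif_neg (by simpa using hj), dif_pos hj]
  · rw [dif_neg hj, dif_pos (Finset.mem_compl.mpr hj)]

end BPS

end Helpers

theorem blei_popa_sinnamon_core {n M : ℕ}
    (S : Fin M → Finset (Fin n))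
    (q : Fin M → ℝ≥0∞) (hq : ∀ i, 0 < q i) (hq1 : ∑ i : Fin M, (q i)⁻¹ ≤ 1)
    (c : Fin M → ℝ≥0)
    (hc : ∀ j : Fin n, ∑ i ∈ Finset.univ.filter (fun i => j ∈ S i), c i = 1)
    {X : Fin n → Type*} [∀ j, MeasurableSpace (X j)]
    (μ : ∀ j, Measure (X j)) [∀ j, SigmaFinite (μ j)]
    (f : Fin M → (∀ j, X j) → ℝ≥0∞) (hf : ∀ i, Measurable (f i))
    (x₀ : ∀ j, X j) :
    ∫⁻ x, ∏ i : Fin M, f i x ∂(Measure.pi μ) ≤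
      ∏ i : Fin M,
        eNorm (Measure.pi fun j : S i => μ j)
          ((q i)⁻¹ + (c i : ℝ≥0∞) * (1 - ∑ i' : Fin M, (q i')⁻¹))⁻¹
          (fun a => BPS.innerF μ (S i) (q i) (f i) (Function.updateFinset x₀ (S i) a)) := by
  classical
  open BPS Function in
  set ν := Measure.pi μ with hν
  set Eps : ℝ≥0∞ := 1 - ∑ i' : Fin M, (q i')⁻¹ with hEpsdef
  set P : Fin M → ℝ≥0∞ := fun i => ((q i)⁻¹ + (c i : ℝ≥0∞) * Eps)⁻¹ with hPdef
  set F : Fin M → (∀ j, X j) → ℝ≥0∞ := fun i => innerF μ (S i) (q i) (f i) with hFdef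
  set A : Fin M → ℝ≥0∞ := fun i =>
      eNorm (Measure.pi fun j : S i => μ j) (P i)
        (fun a => innerF μ (S i) (q i) (f i) (updateFinset x₀ (S i) a)) with hAdef
  -- it suffices to bound by `∏ i, A i`
  suffices hmain : ∫⁻ x, ∏ i : Fin M, f i x ∂ν ≤ ∏ i : Fin M, A i by
    exact hmain.trans (le_of_eq (Finset.prod_congr rfl fun i _ => by rw [hAdef]))
  -- basic exponent facts
  have hq0 : ∀ i, q i ≠ 0 := fun i => (hq i).ne'
  have hqinv_ne_top : ∀ i, (q i)⁻¹ ≠ ∞ := fun i => by simp [ENNReal.inv_eq_top, hq0 i]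
  have hEps_le_one : Eps ≤ 1 := tsub_le_self
  have hEps_ne_top : Eps ≠ ∞ := (hEps_le_one.trans_lt ENNReal.one_lt_top).ne
  have hcEps_ne_top : ∀ i, (c i : ℝ≥0∞) * Eps ≠ ∞ :=
    fun i => ENNReal.mul_ne_top ENNReal.coe_ne_top hEps_ne_top
  have hPinv_ne_top : ∀ i, (q i)⁻¹ + (c i : ℝ≥0∞) * Eps ≠ ∞ :=
    fun i => ENNReal.add_ne_top.2 ⟨hqinv_ne_top i, hcEps_ne_top i⟩
  have hP_ne_zero : ∀ i, P i ≠ 0 := fun i => ENNReal.inv_ne_zero.2 (hPinv_ne_top i)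
  have hP_top_iff : ∀ i, (P i = ∞ ↔ (q i)⁻¹ + (c i : ℝ≥0∞) * Eps = 0) := fun i => by
    rw [hPdef]; exact ENNReal.inv_eq_top
  have hq_top_of_P_top : ∀ i, P i = ∞ → q i = ∞ := by
    intro i h
    have h0 := (hP_top_iff i).1 h
    rw [add_eq_zero] at h0
    simpa [ENNReal.inv_eq_zero] using h0.1
  have hP_ne_top_of_q : ∀ i, q i ≠ ∞ → P i ≠ ∞ :=
    fun i hqi hPi => hqi (hq_top_of_P_top i hPi)
  have hqr_pos : ∀ i, q i ≠ ∞ → 0 < (q i).toReal := fun i h => ENNReal.toReal_pos (hq0 i) h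
  have hqinvr_nonneg : ∀ i, (0:ℝ) ≤ ((q i)⁻¹).toReal := fun i => ENNReal.toReal_nonneg
  have hqinvr_top : ∀ i, q i = ∞ → ((q i)⁻¹).toReal = 0 := fun i h => by simp [h]
  have hPr_pos : ∀ i, P i ≠ ∞ → 0 < (P i).toReal :=
    fun i h => ENNReal.toReal_pos (hP_ne_zero i) h
  have hkey : ∀ i, P i ≠ ∞ →
      (P i).toReal * (((q i)⁻¹).toReal + (c i : ℝ) * Eps.toReal) = 1 := by
    intro i hPi
    have hs_ne_zero : (q i)⁻¹ + (c i : ℝ≥0∞) * Eps ≠ 0 := fun h => hPi ((hP_top_iff i).2 h)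
    have h1 : P i * ((q i)⁻¹ + (c i : ℝ≥0∞) * Eps) = 1 := by
      rw [hPdef]
      exact ENNReal.inv_mul_cancel hs_ne_zero (hPinv_ne_top i)
    have h2 : ((q i)⁻¹ + (c i : ℝ≥0∞) * Eps).toReal
        = ((q i)⁻¹).toReal + (c i : ℝ) * Eps.toReal := by
      rw [ENNReal.toReal_add (hqinv_ne_top i) (hcEps_ne_top i), ENNReal.toReal_mul,
        ENNReal.coe_toReal]
    calc (P i).toReal * (((q i)⁻¹).toReal + (c i : ℝ) * Eps.toReal)
        = (P i * ((q i)⁻¹ + (c i : ℝ≥0∞) * Eps)).toReal := by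
          rw [ENNReal.toReal_mul, h2]
      _ = 1 := by rw [h1, ENNReal.toReal_one]
  have hEpsr_nonneg : (0:ℝ) ≤ Eps.toReal := ENNReal.toReal_nonneg
  have hSum_ne_top : (∑ i' : Fin M, (q i')⁻¹) ≠ ∞ := (hq1.trans_lt ENNReal.one_lt_top).ne
  have hweights : Eps.toReal + ∑ i' : Fin M, ((q i')⁻¹).toReal = 1 := by
    have hsum : (∑ i' : Fin M, (q i')⁻¹).toReal = ∑ i', ((q i')⁻¹).toReal :=
      ENNReal.toReal_sum fun i _ => hqinv_ne_top i
    rw [hEpsdef, ENNReal.toReal_sub_of_le hq1 ENNReal.one_ne_top, ENNReal.toReal_one, hsum]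
    ring
  -- facts about F and A
  have hFmeas : ∀ i, Measurable (F i) := fun i => measurable_innerF μ (S i) (q i) (hf i)
  have hFdep : ∀ i, DepOn (F i) (S i) := fun i => innerF_depOn μ (S i) (q i) (f i)
  have hF_pow : ∀ i, q i ≠ ∞ → ∀ x,
      (∫⋯∫⁻_(S i)ᶜ, (fun z => f i z ^ (q i).toReal) ∂μ) x = F i x ^ (q i).toReal := by
    intro i hqi x
    rw [hFdef]
    simp only
    rw [innerF_eq_lmarginal μ (S i) hqi (f i)]
    rw [← ENNReal.rpow_mul, one_div, inv_mul_cancel₀ (hqr_pos i hqi).ne', ENNReal.rpow_one]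
  have hA_eq : ∀ i, P i ≠ ∞ → A i =
      ((∫⋯∫⁻_(S i), (fun x => F i x ^ (P i).toReal) ∂μ) x₀) ^ (1/(P i).toReal) := by
    intro i hPi
    rw [hAdef]
    simp only
    rw [eNorm, if_neg hPi]
    rfl
  have hA_pow : ∀ i, P i ≠ ∞ →
      (∫⋯∫⁻_(S i), (fun x => F i x ^ (P i).toReal) ∂μ) x₀ = A i ^ (P i).toReal := by
    intro i hPi
    rw [hA_eq i hPi, ← ENNReal.rpow_mul, one_div, inv_mul_cancel₀ (hPr_pos i hPi).ne',
      ENNReal.rpow_one]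
  have hA_essSup : ∀ i, P i = ∞ → A i =
      essSup (fun a => F i (updateFinset x₀ (S i) a)) (Measure.pi fun j : S i => μ j) := by
    intro i hPi
    rw [hAdef]
    simp only
    rw [eNorm, if_pos hPi]
  -- transfer of a.e. properties from marginals to the full product
  have ae_marg : ∀ (E : Finset (Fin n)) (Pp : (∀ j, X j) → Prop),
      MeasurableSet {x | Pp x} →
      (∀ᵐ (a : ∀ j : E, X j) ∂(Measure.pi fun j : E => μ j),
        ∀ᵐ (b : ∀ j : (Eᶜ : Finset (Fin n)), X j)
          ∂(Measure.pi fun j : (Eᶜ : Finset (Fin n)) => μ j),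
          Pp (updateFinset (updateFinset x₀ E a) Eᶜ b)) →
      ∀ᵐ x ∂ν, Pp x := by
    intro E Pp hPmeas h
    rw [ae_iff]
    have hNmeas : MeasurableSet {x | ¬ Pp x} := hPmeas.compl
    have hind : ν {x | ¬ Pp x}
        = ∫⁻ x, {x | ¬ Pp x}.indicator (fun _ => (1:ℝ≥0∞)) x ∂ν :=
      (lintegral_indicator_one hNmeas).symm
    rw [hind, lintegral_eq_lmarginal_univ x₀, ← Finset.union_compl E,
      lmarginal_union μ _ (measurable_const.indicator hNmeas) disjoint_compl_right]
    have inner0 : ∀ᵐ (a : ∀ j : E, X j) ∂(Measure.pi fun j : E => μ j),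
        (∫⋯∫⁻_Eᶜ, {x | ¬ Pp x}.indicator (fun _ => (1:ℝ≥0∞)) ∂μ)
          (updateFinset x₀ E a) = 0 := by
      filter_upwards [h] with a ha
      rw [MeasureTheory.lmarginal]
      rw [← lintegral_zero]
      refine lintegral_congr_ae ?_
      filter_upwards [ha] with b hb
      simp [Set.indicator_apply, hb]
    rw [MeasureTheory.lmarginal, ← lintegral_zero]
    exact lintegral_congr_ae inner0
  -- T1 : for exponent ∞, f is a.e. dominated by F
  have T1 : ∀ i, q i = ∞ → ∀ᵐ x ∂ν, f i x ≤ F i x := by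
    intro i hqi
    refine ae_marg (S i) _ (measurableSet_le (hf i) (hFmeas i)) ?_
    refine Filter.Eventually.of_forall fun a => ?_
    have hFval : F i (updateFinset x₀ (S i) a)
        = essSup (fun b => f i (updateFinset (updateFinset x₀ (S i) a) (S i)ᶜ b))
            (Measure.pi fun j : ((S i)ᶜ : Finset (Fin n)) => μ j) := by
      rw [hFdef]
      simp only
      rw [innerF, eNorm, if_pos hqi]
    filter_upwards [ENNReal.ae_le_essSup
      (fun b => f i (updateFinset (updateFinset x₀ (S i) a) (S i)ᶜ b))] with b hb
    show f i _ ≤ F i _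
    rw [(hFdep i).updateFinset_eq disjoint_compl_right, hFval]
    exact hb
  -- T2 : if `P i = ∞` then F is a.e. dominated by the constant `A i`
  have T2 : ∀ i, P i = ∞ → ∀ᵐ x ∂ν, F i x ≤ A i := by
    intro i hPi
    refine ae_marg (S i) _ (measurableSet_le (hFmeas i) measurable_const) ?_
    filter_upwards [ENNReal.ae_le_essSup (fun a => F i (updateFinset x₀ (S i) a))] with a ha
    refine Filter.Eventually.of_forall fun b => ?_
    show F i _ ≤ A i
    rw [(hFdep i).updateFinset_eq disjoint_compl_right, hA_essSup i hPi]
    exact ha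
  -- T3 : if `P i ≠ ∞` and `A i ≠ ∞`, then F is a.e. finite
  have T3 : ∀ i, P i ≠ ∞ → A i ≠ ∞ → ∀ᵐ x ∂ν, F i x ≠ ∞ := by
    intro i hPi hAi
    have hFup_meas : Measurable fun (a : ∀ j : S i, X j) =>
        F i (updateFinset x₀ (S i) a) ^ (P i).toReal :=
      (ENNReal.continuous_rpow_const.measurable).comp
        ((hFmeas i).comp measurable_updateFinset)
    have hset : MeasurableSet {x | F i x ≠ ∞} :=
      ((hFmeas i) (measurableSet_singleton ∞)).compl
    refine ae_marg (S i) _ hset ?_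
    have hint : ∫⁻ a, F i (updateFinset x₀ (S i) a) ^ (P i).toReal
        ∂(Measure.pi fun j : S i => μ j) ≠ ∞ := by
      have := hA_pow i hPi
      rw [MeasureTheory.lmarginal] at this
      rw [this]
      exact ENNReal.rpow_ne_top_of_nonneg ENNReal.toReal_nonneg hAi
    filter_upwards [ae_lt_top hFup_meas hint] with a ha
    refine Filter.Eventually.of_forall fun b => ?_
    show F i _ ≠ ∞
    rw [(hFdep i).updateFinset_eq disjoint_compl_right]
    intro htop
    rw [htop, ENNReal.top_rpow_of_pos (hPr_pos i hPi)] at ha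
    exact absurd rfl ha.ne
  -- T4 : if `q i ≠ ∞` then a.e. `F i x = 0 → f i x = 0`
  have T4 : ∀ i, q i ≠ ∞ → ∀ᵐ x ∂ν, (F i x = 0 → f i x = 0) := by
    intro i hqi
    have hset : MeasurableSet {x | F i x = 0 → f i x = 0} := by
      have : {x | F i x = 0 → f i x = 0}
          = (F i ⁻¹' {0})ᶜ ∪ (f i ⁻¹' {0}) := by
        ext x; simp [imp_iff_not_or]
      rw [this]
      exact ((hFmeas i) (measurableSet_singleton 0)).compl.union
        ((hf i) (measurableSet_singleton 0))
    refine ae_marg (S i) _ hset ?_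
    refine Filter.Eventually.of_forall fun a => ?_
    by_cases h0 : F i (updateFinset x₀ (S i) a) = 0
    · have hzero : (∫⋯∫⁻_(S i)ᶜ, (fun z => f i z ^ (q i).toReal) ∂μ)
          (updateFinset x₀ (S i) a) = 0 := by
        rw [hF_pow i hqi, h0, ENNReal.zero_rpow_of_pos (hqr_pos i hqi)]
      rw [MeasureTheory.lmarginal] at hzero
      have hmeasb : Measurable fun (b : ∀ j : ((S i)ᶜ : Finset (Fin n)), X j) =>
          f i (updateFinset (updateFinset x₀ (S i) a) (S i)ᶜ b) ^ (q i).toReal :=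
        (ENNReal.continuous_rpow_const.measurable).comp ((hf i).comp measurable_updateFinset)
      filter_upwards [(lintegral_eq_zero_iff hmeasb).1 hzero] with b hb
      intro _
      rcases (ENNReal.rpow_eq_zero_iff).1 hb with ⟨h, -⟩ | ⟨-, hneg⟩
      · exact h
      · exact absurd hneg (not_lt.2 (hqr_pos i hqi).le)
    · refine Filter.Eventually.of_forall fun b => ?_
      intro hcontra
      rw [(hFdep i).updateFinset_eq disjoint_compl_right] at hcontra
      exact absurd hcontra h0
  -- case: some A i = 0 ; then the left-hand side vanishes
  by_cases hA0 : ∃ i₀, A i₀ = 0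
  · obtain ⟨i₀, hi₀⟩ := hA0
    have hFa0 : ∀ᵐ (a : ∀ j : S i₀, X j) ∂(Measure.pi fun j : S i₀ => μ j),
        F i₀ (updateFinset x₀ (S i₀) a) = 0 := by
      by_cases hPi : P i₀ = ∞
      · have h0 : essSup (fun a => F i₀ (updateFinset x₀ (S i₀) a))
            (Measure.pi fun j : S i₀ => μ j) = 0 := by
          rw [← hA_essSup i₀ hPi, hi₀]
        filter_upwards [ENNReal.essSup_eq_zero_iff.1 h0] with a ha
        exact ha
      · have h1 : (∫⋯∫⁻_(S i₀), (fun x => F i₀ x ^ (P i₀).toReal) ∂μ) x₀ = 0 := by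
          rw [hA_pow i₀ hPi, hi₀, ENNReal.zero_rpow_of_pos (hPr_pos i₀ hPi)]
        rw [MeasureTheory.lmarginal] at h1
        have hm : Measurable fun (a : ∀ j : S i₀, X j) =>
            F i₀ (updateFinset x₀ (S i₀) a) ^ (P i₀).toReal :=
          (ENNReal.continuous_rpow_const.measurable).comp
            ((hFmeas i₀).comp measurable_updateFinset)
        filter_upwards [(lintegral_eq_zero_iff hm).1 h1] with a ha
        rcases ENNReal.rpow_eq_zero_iff.1 ha with ⟨h, -⟩ | ⟨-, hneg⟩
        · exact h
        · exact absurd hneg (not_lt.2 (hPr_pos i₀ hPi).le)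
    have hf0 : ∀ᵐ x ∂ν, f i₀ x = 0 := by
      refine ae_marg (S i₀) _ ((hf i₀) (measurableSet_singleton 0)) ?_
      filter_upwards [hFa0] with a ha
      by_cases hqi : q i₀ = ∞
      · have hFval : F i₀ (updateFinset x₀ (S i₀) a)
            = essSup (fun b => f i₀ (updateFinset (updateFinset x₀ (S i₀) a) (S i₀)ᶜ b))
                (Measure.pi fun j : ((S i₀)ᶜ : Finset (Fin n)) => μ j) := by
          rw [hFdef]
          simp only
          rw [innerF, eNorm, if_pos hqi]
        rw [hFval] at ha
        filter_upwards [ENNReal.essSup_eq_zero_iff.1 ha] with b hb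
        exact hb
      · have hzero : (∫⋯∫⁻_(S i₀)ᶜ, (fun z => f i₀ z ^ (q i₀).toReal) ∂μ)
            (updateFinset x₀ (S i₀) a) = 0 := by
          rw [hF_pow i₀ hqi, ha, ENNReal.zero_rpow_of_pos (hqr_pos i₀ hqi)]
        rw [MeasureTheory.lmarginal] at hzero
        have hmeasb : Measurable fun (b : ∀ j : ((S i₀)ᶜ : Finset (Fin n)), X j) =>
            f i₀ (updateFinset (updateFinset x₀ (S i₀) a) (S i₀)ᶜ b) ^ (q i₀).toReal :=
          (ENNReal.continuous_rpow_const.measurable).comp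
            ((hf i₀).comp measurable_updateFinset)
        filter_upwards [(lintegral_eq_zero_iff hmeasb).1 hzero] with b hb
        rcases ENNReal.rpow_eq_zero_iff.1 hb with ⟨h, -⟩ | ⟨-, hneg⟩
        · exact h
        · exact absurd hneg (not_lt.2 (hqr_pos i₀ hqi).le)
    calc ∫⁻ x, ∏ i : Fin M, f i x ∂ν = 0 := by
          rw [← lintegral_zero]
          refine lintegral_congr_ae ?_
          filter_upwards [hf0] with x hx
          exact Finset.prod_eq_zero (Finset.mem_univ i₀) hx
      _ ≤ ∏ i : Fin M, A i := zero_le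
  push_neg at hA0
  -- case: some A i = ∞ ; then the right-hand side is infinite
  by_cases hAtop : ∃ i₀, A i₀ = ∞
  · obtain ⟨i₀, hi₀⟩ := hAtop
    have htop : ∏ i : Fin M, A i = ∞ := by
      rw [← Finset.prod_erase_mul Finset.univ A (Finset.mem_univ i₀), hi₀,
        ENNReal.mul_top (Finset.prod_ne_zero_iff.2 fun i _ => hA0 i)]
    rw [htop]
    exact le_top
  push_neg at hAtop
  -- main case: all `A i` are finite and nonzero
  -- auxiliary functions
  set I0 : Finset (Fin M) := Finset.univ.filter (fun i => P i = ∞) with hI0def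
  set g : (∀ j, X j) → ℝ≥0∞ := fun x =>
      ∏ i ∈ Finset.univ.filter (fun i => ¬ P i = ∞),
        (if q i = ∞ then F i x else f i x) with hgdef
  set U : Fin M → (∀ j, X j) → ℝ≥0∞ := fun i x =>
      f i x ^ (q i).toReal * F i x ^ ((P i).toReal - (q i).toReal) with hUdef
  set V : (∀ j, X j) → ℝ≥0∞ := fun x =>
      ∏ i : Fin M, (F i x ^ (P i).toReal) ^ (c i : ℝ) with hVdef
  have hgmeas : Measurable g := by
    rw [hgdef]
    refine Finset.measurable_prod _ fun i _ => ?_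
    by_cases hqi : q i = ∞
    · simpa [hqi] using hFmeas i
    · simpa [hqi] using hf i
  have hUmeas : ∀ i, Measurable (U i) := by
    intro i
    rw [hUdef]
    exact ((ENNReal.continuous_rpow_const.measurable).comp (hf i)).mul
      ((ENNReal.continuous_rpow_const.measurable).comp (hFmeas i))
  have hVmeas : Measurable V := by
    rw [hVdef]
    exact Finset.measurable_prod _ fun i _ =>
      (ENNReal.continuous_rpow_const.measurable).comp
        ((ENNReal.continuous_rpow_const.measurable).comp (hFmeas i))
  -- a.e. hypotheses, quantified over all indices
  have hae1 : ∀ᵐ x ∂ν, ∀ i, q i = ∞ → f i x ≤ F i x := by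
    rw [MeasureTheory.ae_all_iff]
    intro i
    by_cases hqi : q i = ∞
    · filter_upwards [T1 i hqi] with x hx _; exact hx
    · exact Filter.Eventually.of_forall fun x hx => absurd hx hqi
  have hae2 : ∀ᵐ x ∂ν, ∀ i, P i = ∞ → F i x ≤ A i := by
    rw [MeasureTheory.ae_all_iff]
    intro i
    by_cases hPi : P i = ∞
    · filter_upwards [T2 i hPi] with x hx _; exact hx
    · exact Filter.Eventually.of_forall fun x hx => absurd hx hPi
  have hae3 : ∀ᵐ x ∂ν, ∀ i, ¬ P i = ∞ → F i x ≠ ∞ := by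
    rw [MeasureTheory.ae_all_iff]
    intro i
    by_cases hPi : P i = ∞
    · exact Filter.Eventually.of_forall fun x hx => absurd hPi hx
    · filter_upwards [T3 i hPi (hAtop i)] with x hx _; exact hx
  have hae4 : ∀ᵐ x ∂ν, ∀ i, ¬ q i = ∞ → (F i x = 0 → f i x = 0) := by
    rw [MeasureTheory.ae_all_iff]
    intro i
    by_cases hqi : q i = ∞
    · exact Filter.Eventually.of_forall fun x hx => absurd hqi hx
    · filter_upwards [T4 i hqi] with x hx _; exact hx
  -- Step 1 : pull out the indices with infinite outer exponent
  have step1 : ∫⁻ x, ∏ i : Fin M, f i x ∂ν ≤ (∏ i ∈ I0, A i) * ∫⁻ x, g x ∂ν := by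
    rw [← lintegral_const_mul _ hgmeas]
    refine lintegral_mono_ae ?_
    filter_upwards [hae1, hae2] with x h1 h2
    calc ∏ i : Fin M, f i x
        = (∏ i ∈ Finset.univ.filter (fun i => P i = ∞), f i x) *
          ∏ i ∈ Finset.univ.filter (fun i => ¬ P i = ∞), f i x :=
          (Finset.prod_filter_mul_prod_filter_not Finset.univ _ _).symm
      _ ≤ (∏ i ∈ I0, A i) * g x := by
          refine mul_le_mul' ?_ ?_
          · rw [hI0def]
            refine Finset.prod_le_prod' fun i hi => ?_
            have hPi := (Finset.mem_filter.1 hi).2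
            exact (h1 i (hq_top_of_P_top i hPi)).trans (h2 i hPi)
          · rw [hgdef]
            refine Finset.prod_le_prod' fun i hi => ?_
            by_cases hqi : q i = ∞
            · rw [if_pos hqi]; exact h1 i hqi
            · rw [if_neg hqi]
  -- Step 2 : pointwise bound by the Hölder-type product
  have step2 : ∀ᵐ x ∂ν, g x ≤ V x ^ Eps.toReal * ∏ i : Fin M, U i x ^ ((q i)⁻¹).toReal := by
    filter_upwards [hae3, hae4] with x h3 h4
    by_cases hbad : ∃ i, ¬ P i = ∞ ∧ F i x = 0
    · obtain ⟨i₁, hi₁, hFi₁⟩ := hbad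
      have hg0 : g x = 0 := by
        rw [hgdef]
        refine Finset.prod_eq_zero (Finset.mem_filter.2 ⟨Finset.mem_univ _, hi₁⟩) ?_
        by_cases hq₁ : q i₁ = ∞
        · rw [if_pos hq₁]; exact hFi₁
        · rw [if_neg hq₁]; exact h4 i₁ hq₁ hFi₁
      rw [hg0]
      exact zero_le
    · push_neg at hbad
      have hWeq : ∀ i : Fin M,
          ((F i x ^ (P i).toReal) ^ (c i : ℝ)) ^ Eps.toReal * U i x ^ ((q i)⁻¹).toReal
          = (if ¬ P i = ∞ then (if q i = ∞ then F i x else f i x) else 1) := by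
        intro i
        rw [hUdef]
        simp only
        rw [← ENNReal.rpow_mul, ← ENNReal.rpow_mul]
        by_cases hPi : P i = ∞
        · have hqi := hq_top_of_P_top i hPi
          rw [if_neg (not_not_intro hPi), hqinvr_top i hqi, hPi, hqi]
          simp
        · rw [if_pos hPi]
          by_cases hqi : q i = ∞
          · rw [if_pos hqi, hqinvr_top i hqi, ENNReal.rpow_zero, mul_one]
            have hexp : (P i).toReal * ((c i : ℝ) * Eps.toReal) = 1 := by
              have h := hkey i hPi
              rw [hqinvr_top i hqi] at h
              linear_combination h
            rw [hexp, ENNReal.rpow_one]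
          · obtain hF0 := hbad i hPi
            obtain hFt := h3 i hPi
            have hqinv_eq : ((q i)⁻¹).toReal = ((q i).toReal)⁻¹ := ENNReal.toReal_inv _
            rw [if_neg hqi,
              ENNReal.mul_rpow_of_nonneg _ _ (hqinvr_nonneg i),
              ← ENNReal.rpow_mul (f i x), ← ENNReal.rpow_mul (F i x),
              hqinv_eq, mul_inv_cancel₀ (hqr_pos i hqi).ne', ENNReal.rpow_one,
              mul_left_comm, ← ENNReal.rpow_add _ _ hF0 hFt]
            have hexp : (P i).toReal * ((c i : ℝ) * Eps.toReal) +
                ((P i).toReal - (q i).toReal) * ((q i).toReal)⁻¹ = 0 := by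
              have h := hkey i hPi
              rw [hqinv_eq] at h
              have hsub : ((P i).toReal - (q i).toReal) * ((q i).toReal)⁻¹
                  = (P i).toReal * ((q i).toReal)⁻¹ - 1 := by
                rw [sub_mul, mul_inv_cancel₀ (hqr_pos i hqi).ne']
              rw [hsub]
              linear_combination h
            rw [hexp, ENNReal.rpow_zero, mul_one]
      refine le_of_eq ?_
      calc g x
          = ∏ i : Fin M, (if ¬ P i = ∞ then (if q i = ∞ then F i x else f i x) else 1) := by
            rw [hgdef]; exact Finset.prod_filter _ _
        _ = ∏ i : Fin M, ((F i x ^ (P i).toReal) ^ (c i : ℝ)) ^ Eps.toReal *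
              U i x ^ ((q i)⁻¹).toReal :=
            Finset.prod_congr rfl fun i _ => (hWeq i).symm
        _ = (∏ i : Fin M, ((F i x ^ (P i).toReal) ^ (c i : ℝ)) ^ Eps.toReal) *
              ∏ i : Fin M, U i x ^ ((q i)⁻¹).toReal := Finset.prod_mul_distrib
        _ = V x ^ Eps.toReal * ∏ i : Fin M, U i x ^ ((q i)⁻¹).toReal := by
            rw [hVdef]
            congr 1
            exact ENNReal.prod_rpow_of_nonneg hEpsr_nonneg
  -- Step 3 : Hölder's inequality on the full product space
  have step3 : ∫⁻ x, V x ^ Eps.toReal * ∏ i : Fin M, U i x ^ ((q i)⁻¹).toReal ∂ν ≤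
      (∫⁻ x, V x ∂ν) ^ Eps.toReal * ∏ i : Fin M, (∫⁻ x, U i x ∂ν) ^ ((q i)⁻¹).toReal := by
    have h := ENNReal.lintegral_prod_norm_pow_le (μ := ν) (Finset.insertNone Finset.univ)
      (f := fun o => Option.elim o V U)
      (p := fun o => Option.elim o Eps.toReal (fun i => ((q i)⁻¹).toReal))
      (fun o _ => ?_) ?_ (fun o _ => ?_)
    · simp only [Finset.prod_insertNone, Option.elim] at h
      exact h
    · cases o with
      | none => exact hVmeas.aemeasurable
      | some i => exact (hUmeas i).aemeasurable
    · rw [Finset.sum_insertNone]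
      simpa using hweights
    · cases o with
      | none => exact hEpsr_nonneg
      | some i => exact hqinvr_nonneg i
  -- Step 4 : bound the Hölder factors of the `U i`
  have step4 : ∀ i : Fin M, (∫⁻ x, U i x ∂ν) ^ ((q i)⁻¹).toReal ≤
      A i ^ ((P i).toReal * ((q i)⁻¹).toReal) := by
    intro i
    by_cases hqi : q i = ∞
    · rw [hqinvr_top i hqi, mul_zero, ENNReal.rpow_zero, ENNReal.rpow_zero]
    · have hPi : P i ≠ ∞ := hP_ne_top_of_q i hqi
      have hfq_meas : Measurable fun z => f i z ^ (q i).toReal :=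
        (ENNReal.continuous_rpow_const.measurable).comp (hf i)
      have hle : ∫⁻ x, U i x ∂ν ≤ A i ^ (P i).toReal := by
        rw [hν, lintegral_eq_lmarginal_univ x₀, ← Finset.union_compl (S i),
          lmarginal_union μ _ (hUmeas i) disjoint_compl_right, ← hA_pow i hPi]
        refine lmarginal_mono (fun x => ?_) x₀
        have hUsplit : U i = fun z => (fun w => F i w ^ ((P i).toReal - (q i).toReal)) z *
            (fun w => f i w ^ (q i).toReal) z := by
          funext z
          rw [hUdef]
          exact mul_comm _ _
        rw [hUsplit, lmarginal_mul_depOn ((hFdep i).rpow _) hfq_meas disjoint_compl_right,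
          hF_pow i hqi]
        calc F i x ^ ((P i).toReal - (q i).toReal) * F i x ^ (q i).toReal
            ≤ F i x ^ ((P i).toReal - (q i).toReal + (q i).toReal) := rpow_mul_rpow_le _ _ _
          _ = F i x ^ (P i).toReal := by rw [sub_add_cancel]
      calc (∫⁻ x, U i x ∂ν) ^ ((q i)⁻¹).toReal
          ≤ (A i ^ (P i).toReal) ^ ((q i)⁻¹).toReal :=
            ENNReal.rpow_le_rpow hle (hqinvr_nonneg i)
        _ = A i ^ ((P i).toReal * ((q i)⁻¹).toReal) := (ENNReal.rpow_mul _ _ _).symm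
  -- Step 5 : Finner's inequality for the factor `V`
  have step5 : (∫⁻ x, V x ∂ν) ^ Eps.toReal ≤
      ∏ i : Fin M, A i ^ ((P i).toReal * ((c i : ℝ) * Eps.toReal)) := by
    rcases eq_or_lt_of_le hEpsr_nonneg with heps0 | hepspos
    · rw [← heps0]
      simp
    · have hEps_ne_zero : Eps ≠ 0 := by
        intro h
        rw [h] at hepspos
        simp at hepspos
      have hsumc : ∀ j ∈ (Finset.univ : Finset (Fin n)),
          ∑ i ∈ Finset.univ.filter (fun i => j ∈ S i), (c i : ℝ) = 1 := by
        intro j _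
        have h := hc j
        have : ((∑ i ∈ Finset.univ.filter (fun i => j ∈ S i), c i : ℝ≥0) : ℝ)
            = ∑ i ∈ Finset.univ.filter (fun i => j ∈ S i), (c i : ℝ) := by push_cast; rfl
        rw [← this, h, NNReal.coe_one]
      have hfinner : ∫⁻ x, V x ∂ν ≤ ∏ i : Fin M, (A i ^ (P i).toReal) ^ (c i : ℝ) := by
        rw [hν, lintegral_eq_lmarginal_univ x₀]
        have happ := finner_lemma μ Finset.univ S (fun i x => F i x ^ (P i).toReal)
          (fun i _ => (ENNReal.continuous_rpow_const.measurable).comp (hFmeas i))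
          (fun i _ => (hFdep i).rpow _) (fun i => (c i : ℝ))
          (fun i _ => (c i).coe_nonneg) Finset.univ hsumc x₀
        refine le_trans (le_of_eq ?_) (happ.trans (le_of_eq ?_))
        · rw [hVdef]
        · refine Finset.prod_congr rfl fun i _ => ?_
          rw [Finset.univ_inter]
          by_cases hPi : P i = ∞
          · have hc0 : (c i : ℝ) = 0 := by
              have h0 := (hP_top_iff i).1 hPi
              rw [add_eq_zero] at h0
              rcases mul_eq_zero.1 h0.2 with hc | hE
              · simpa using hc
              · exact absurd hE hEps_ne_zero
            rw [hc0, ENNReal.rpow_zero, ENNReal.rpow_zero]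
          · rw [hA_pow i hPi]
      calc (∫⁻ x, V x ∂ν) ^ Eps.toReal
          ≤ (∏ i : Fin M, (A i ^ (P i).toReal) ^ (c i : ℝ)) ^ Eps.toReal :=
            ENNReal.rpow_le_rpow hfinner hEpsr_nonneg
        _ = ∏ i : Fin M, A i ^ ((P i).toReal * ((c i : ℝ) * Eps.toReal)) := by
            rw [← ENNReal.prod_rpow_of_nonneg hEpsr_nonneg]
            refine Finset.prod_congr rfl fun i _ => ?_
            rw [← ENNReal.rpow_mul, ← ENNReal.rpow_mul]
  -- Step 6 : recombination of the powers of `A i`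
  have step6 : (∏ i ∈ I0, A i) *
      ((∏ i : Fin M, A i ^ ((P i).toReal * ((c i : ℝ) * Eps.toReal))) *
        ∏ i : Fin M, A i ^ ((P i).toReal * ((q i)⁻¹).toReal)) = ∏ i : Fin M, A i := by
    rw [hI0def, Finset.prod_filter, ← Finset.prod_mul_distrib, ← Finset.prod_mul_distrib]
    refine Finset.prod_congr rfl fun i _ => ?_
    by_cases hPi : P i = ∞
    · rw [if_pos hPi, hPi]
      simp
    · rw [if_neg hPi, one_mul, ← ENNReal.rpow_add _ _ (hA0 i) (hAtop i)]
      have hexp : (P i).toReal * ((c i : ℝ) * Eps.toReal) +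
          (P i).toReal * ((q i)⁻¹).toReal = 1 := by
        have h := hkey i hPi
        linear_combination h
      rw [hexp, ENNReal.rpow_one]
  -- final chain
  calc ∫⁻ x, ∏ i : Fin M, f i x ∂ν
      ≤ (∏ i ∈ I0, A i) * ∫⁻ x, g x ∂ν := step1
    _ ≤ (∏ i ∈ I0, A i) *
          ∫⁻ x, V x ^ Eps.toReal * ∏ i : Fin M, U i x ^ ((q i)⁻¹).toReal ∂ν :=
        mul_le_mul_right (lintegral_mono_ae step2) _
    _ ≤ (∏ i ∈ I0, A i) *
          ((∫⁻ x, V x ∂ν) ^ Eps.toReal * ∏ i : Fin M, (∫⁻ x, U i x ∂ν) ^ ((q i)⁻¹).toReal) :=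
        mul_le_mul_right step3 _
    _ ≤ (∏ i ∈ I0, A i) *
          ((∏ i : Fin M, A i ^ ((P i).toReal * ((c i : ℝ) * Eps.toReal))) *
            ∏ i : Fin M, A i ^ ((P i).toReal * ((q i)⁻¹).toReal)) :=
        mul_le_mul_right (mul_le_mul' step5 (Finset.prod_le_prod' fun i _ => step4 i)) _
    _ = ∏ i : Fin M, A i := step6

/-- Combined Blei–Popa–Sinnamon inequality: with `S₁, …, S_M` enumerating the size-`k`
subsets of `{1, …, n}` (`M = C(n,k)`, `0 < k < n`), exponents `q₁, …, q_M ∈ (0,∞]` with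
`Σ 1/qᵢ ≤ 1`, `ε = 1 − Σ 1/qᵢ`, and nonnegative weights `cᵢ` with `Σ_{Sᵢ ∋ j} cᵢ = 1`
for every `j`, setting `1/pᵢ = 1/qᵢ + cᵢ ε` one has
`∫ f₁ ⋯ f_M ≤ ∏ᵢ (∫_{Sᵢ} (∫_{∼Sᵢ} fᵢ^{qᵢ})^{pᵢ/qᵢ})^{1/pᵢ}`, the inner norm being
over the variables in `∼Sᵢ` and the outer over those in `Sᵢ`, with `∞` exponents
interpreted as essential suprema. -/
theorem blei_popa_sinnamon {n k M : ℕ} (hk : 0 < k) (hkn : k < n)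
    (hM : M = n.choose k)
    (S : Fin M → Finset (Fin n)) (hcard : ∀ i, (S i).card = k)
    (henum : ∀ s : Finset (Fin n), s.card = k → ∃! i : Fin M, S i = s)
    (q : Fin M → ℝ≥0∞) (hq : ∀ i, 0 < q i) (hq1 : ∑ i : Fin M, (q i)⁻¹ ≤ 1)
    (c : Fin M → ℝ≥0)
    (hc : ∀ j : Fin n, ∑ i ∈ Finset.univ.filter (fun i => j ∈ S i), c i = 1)
    {X : Fin n → Type*} [∀ j, MeasurableSpace (X j)]
    (μ : ∀ j, Measure (X j)) [∀ j, SigmaFinite (μ j)]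
    (f : Fin M → (∀ j, X j) → ℝ≥0∞) (hf : ∀ i, Measurable (f i)) :
    ∫⁻ x, ∏ i : Fin M, f i x ∂(Measure.pi μ) ≤
      ∏ i : Fin M,
        eNorm (Measure.pi fun j : S i => μ j)
          ((q i)⁻¹ + (c i : ℝ≥0∞) * (1 - ∑ i' : Fin M, (q i')⁻¹))⁻¹
          (fun a => eNorm (Measure.pi fun j : ((S i)ᶜ : Finset (Fin n)) => μ j) (q i)
            (fun b => f i (glue (S i) a b))) := by
  cases isEmpty_or_nonempty (∀ j, X j) with
  | inl hemp =>
    rw [lintegral_of_isEmpty]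
    exact zero_le
  | inr hne =>
    obtain ⟨x₀⟩ := hne
    refine le_trans (blei_popa_sinnamon_core S q hq hq1 c hc μ f hf x₀) (le_of_eq ?_)
    refine Finset.prod_congr rfl fun i _ => ?_
    congr 1
    funext a
    rw [BPS.innerF]
    congr 1
    funext b
    rw [BPS.glue_eq_updateFinset (S i) x₀ a b]
end

section
/- Let x = x_{i,j,k,l} be a quadruply-indexed collection of nonnegative real numbers, each index ranging over an at most countable set. Define A = (Σ_{k,l} (Σ_{i,j} x^{12})^{1/4})^{1/3} · (Σ_{i,j} (Σ_{k,l} x^{12})^{1/4})^{1/3}, B = (Σ_{j,l} (Σ_{i,k} x^{12})^{1/3})^{1/4} · (Σ_{i,k} (Σ_{j,l} x^{12})^{1/3})^{1/4}, and C = (Σ_{j,k} (Σ_{i,l} x^{12})^{1/2})^{1/6} · (Σ_{i,l} (Σ_{j,k} x^{12})^{1/2})^{1/6}. Then Σ_{i,j,k,l} x^{6} ≤ A·B·C. -/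
open scoped ENNReal
open MeasureTheory

namespace QuadrupleAux

lemma meas_all {α : Type*} {f : α → ℝ≥0∞} : @Measurable α ℝ≥0∞ ⊤ _ f :=
  fun _ _ => MeasurableSpace.measurableSet_top

lemma holder6 {α : Type*} [Countable α]
    (f1 f2 f3 f4 f5 f6 : α → ℝ≥0∞) {w1 w2 w3 w4 w5 w6 : ℝ}
    (h1 : 0 ≤ w1) (h2 : 0 ≤ w2) (h3 : 0 ≤ w3) (h4 : 0 ≤ w4) (h5 : 0 ≤ w5) (h6 : 0 ≤ w6)
    (hw : w1 + w2 + w3 + w4 + w5 + w6 = 1) :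
    ∑' a, f1 a ^ w1 * f2 a ^ w2 * f3 a ^ w3 * f4 a ^ w4 * f5 a ^ w5 * f6 a ^ w6 ≤
      (∑' a, f1 a) ^ w1 * (∑' a, f2 a) ^ w2 * (∑' a, f3 a) ^ w3 * (∑' a, f4 a) ^ w4 *
        (∑' a, f5 a) ^ w5 * (∑' a, f6 a) ^ w6 := by
  letI : MeasurableSpace α := ⊤
  haveI : MeasurableSingletonClass α := ⟨fun _ => MeasurableSpace.measurableSet_top⟩
  have key := ENNReal.lintegral_prod_norm_pow_le (μ := Measure.count)
      (Finset.univ : Finset (Fin 6)) (f := ![f1, f2, f3, f4, f5, f6])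
      (fun i _ => (meas_all).aemeasurable)
      (p := ![w1, w2, w3, w4, w5, w6])
      (by rw [Fin.sum_univ_six]; show w1+w2+w3+w4+w5+w6 = 1; exact hw)
      (fun i _ => by fin_cases i <;> assumption)
  simp only [Fin.prod_univ_six, Matrix.cons_val_zero, Matrix.cons_val_one, Matrix.head_cons,
    Matrix.cons_val_two, Matrix.cons_val_three, Matrix.cons_val_four, Matrix.tail_cons,
    Matrix.head_fin_const, Matrix.cons_val_succ, lintegral_count] at key
  exact key

lemma mink_finset {A B : Type*} [Countable B] (s : Finset A)
    (g : A → B → ℝ≥0∞) {p : ℝ} (hp : 1 ≤ p) :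
    (∑' b, (∑ a ∈ s, g a b) ^ p) ^ (1/p) ≤ ∑ a ∈ s, (∑' b, g a b ^ p) ^ (1/p) := by
  letI : MeasurableSpace B := ⊤
  haveI : MeasurableSingletonClass B := ⟨fun _ => MeasurableSpace.measurableSet_top⟩
  have hp0 : (0:ℝ) < p := lt_of_lt_of_le one_pos hp
  classical
  induction s using Finset.induction with
  | empty =>
    simp [ENNReal.zero_rpow_of_pos hp0, ENNReal.zero_rpow_of_pos (by positivity : (0:ℝ) < 1/p), hp0]
  | @insert a s ha ih =>
    have key := ENNReal.lintegral_Lp_add_le (μ := (Measure.count : Measure B))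
      (f := g a) (g := fun b => ∑ x ∈ s, g x b)
      meas_all.aemeasurable meas_all.aemeasurable hp
    simp only [Pi.add_apply, lintegral_count] at key
    simp only [Finset.sum_insert ha]
    exact le_trans key (add_le_add le_rfl ih)

lemma mink_tsum {A B : Type*} [Countable A] [Countable B] (g : A → B → ℝ≥0∞)
    {p : ℝ} (hp : 1 ≤ p) :
    ∑' b, (∑' a, g a b) ^ p ≤ (∑' a, (∑' b, g a b ^ p) ^ (1/p)) ^ p := by
  have hp0 : (0:ℝ) < p := lt_of_lt_of_le one_pos hp
  letI : MeasurableSpace B := ⊤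
  haveI : MeasurableSingletonClass B := ⟨fun _ => MeasurableSpace.measurableSet_top⟩
  have h1 : ∀ b, (∑' a, g a b) ^ p = ⨆ s : Finset A, (∑ a ∈ s, g a b) ^ p := by
    intro b
    rw [ENNReal.tsum_eq_iSup_sum]
    exact Monotone.map_iSup_of_continuousAt ENNReal.continuous_rpow_const.continuousAt
      (ENNReal.monotone_rpow_of_nonneg hp0.le) (by simp [ENNReal.zero_rpow_of_pos hp0])
  have hmono : Monotone fun (s : Finset A) (b : B) => (∑ a ∈ s, g a b) ^ p := by
    intro s t hst b
    exact ENNReal.rpow_le_rpow (Finset.sum_le_sum_of_subset hst) hp0.le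
  have h2 : ∑' b, ⨆ s : Finset A, (∑ a ∈ s, g a b) ^ p
      = ⨆ s : Finset A, ∑' b, (∑ a ∈ s, g a b) ^ p := by
    rw [← lintegral_count (fun b => ⨆ s : Finset A, (∑ a ∈ s, g a b) ^ p),
      lintegral_iSup_directed_of_measurable (fun s => meas_all) hmono.directed_le]
    simp [lintegral_count]
  calc ∑' b, (∑' a, g a b) ^ p
      = ⨆ s : Finset A, ∑' b, (∑ a ∈ s, g a b) ^ p := by simp_rw [h1]; exact h2
    _ ≤ (∑' a, (∑' b, g a b ^ p) ^ (1/p)) ^ p := by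
        refine iSup_le fun s => ?_
        have h3 := mink_finset s g hp
        have h4 : ∑ a ∈ s, (∑' b, g a b ^ p) ^ (1/p) ≤ ∑' a, (∑' b, g a b ^ p) ^ (1/p) :=
          ENNReal.sum_le_tsum s
        have h5 := ENNReal.rpow_le_rpow (le_trans h3 h4) hp0.le
        rwa [← ENNReal.rpow_mul, one_div_mul_cancel hp0.ne', ENNReal.rpow_one] at h5

lemma pow_pow (a : ℝ≥0∞) {c d e : ℝ} (h : c * d = e) : (a ^ c) ^ d = a ^ e := by
  rw [← ENNReal.rpow_mul, h]

end QuadrupleAux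

open QuadrupleAux in
/-- For a quadruply-indexed collection `x = x_{i,j,k,l}` of nonnegative (extended-real)
numbers over at most countable index sets, `Σ x⁶ ≤ A·B·C` where `A`, `B`, `C` are the
symmetric geometric-mean factors built from the exponents `(3,4,6)` paired by
complementary pairs of indices. -/
theorem quadruple_index_inequality {I J K L : Type*}
    [Countable I] [Countable J] [Countable K] [Countable L]
    (x : I → J → K → L → ℝ≥0∞) :
    (∑' i, ∑' j, ∑' k, ∑' l, x i j k l ^ (6 : ℝ)) ≤
      ((∑' k, ∑' l, (∑' i, ∑' j, x i j k l ^ (12 : ℝ)) ^ (1 / 4 : ℝ)) ^ (1 / 3 : ℝ) *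
          (∑' i, ∑' j, (∑' k, ∑' l, x i j k l ^ (12 : ℝ)) ^ (1 / 4 : ℝ)) ^ (1 / 3 : ℝ)) *
        ((∑' j, ∑' l, (∑' i, ∑' k, x i j k l ^ (12 : ℝ)) ^ (1 / 3 : ℝ)) ^ (1 / 4 : ℝ) *
          (∑' i, ∑' k, (∑' j, ∑' l, x i j k l ^ (12 : ℝ)) ^ (1 / 3 : ℝ)) ^ (1 / 4 : ℝ)) *
        ((∑' j, ∑' k, (∑' i, ∑' l, x i j k l ^ (12 : ℝ)) ^ (1 / 2 : ℝ)) ^ (1 / 6 : ℝ) *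
          (∑' i, ∑' l, (∑' j, ∑' k, x i j k l ^ (12 : ℝ)) ^ (1 / 2 : ℝ)) ^ (1 / 6 : ℝ)) := by
  -- Level l Hölder
  have hL : ∀ i j k, (∑' l, x i j k l ^ (6:ℝ)) ≤
      (∑' l, x i j k l ^ (3:ℝ)) ^ (1/3:ℝ) *
      (∑' l, x i j k l ^ (12:ℝ)) ^ (1/12:ℝ) *
      ((∑' l, x i j k l ^ (4:ℝ)) ^ (3:ℝ)) ^ (1/12:ℝ) *
      ((∑' l, x i j k l ^ (12:ℝ)) ^ (1/3:ℝ)) ^ (1/4:ℝ) *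
      ((∑' l, x i j k l ^ (12:ℝ)) ^ (1/2:ℝ)) ^ (1/6:ℝ) *
      ((∑' l, x i j k l ^ (6:ℝ)) ^ (2:ℝ)) ^ (1/12:ℝ) := by
    intro i j k
    have h := holder6 (fun l => x i j k l ^ (3:ℝ)) (fun l => x i j k l ^ (12:ℝ))
        (fun l => x i j k l ^ (4:ℝ)) (fun l => x i j k l ^ (12:ℝ)) (fun l => x i j k l ^ (12:ℝ))
        (fun l => x i j k l ^ (6:ℝ)) (w1 := 1/3) (w2 := 1/12) (w3 := 1/4) (w4 := 1/12)
        (w5 := 1/12) (w6 := 1/6) (by norm_num) (by norm_num) (by norm_num) (by norm_num)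
        (by norm_num) (by norm_num) (by norm_num)
    rw [pow_pow (∑' l, x i j k l ^ (4:ℝ)) (show (3:ℝ)*(1/12) = 1/4 by norm_num),
        pow_pow (∑' l, x i j k l ^ (12:ℝ)) (show (1/3:ℝ)*(1/4) = 1/12 by norm_num),
        pow_pow (∑' l, x i j k l ^ (12:ℝ)) (show (1/2:ℝ)*(1/6) = 1/12 by norm_num),
        pow_pow (∑' l, x i j k l ^ (6:ℝ)) (show (2:ℝ)*(1/12) = 1/6 by norm_num)]
    refine le_trans (le_of_eq (tsum_congr fun l => ?_)) h
    rw [pow_pow _ (show (3:ℝ)*(1/3) = 1 by norm_num),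
        pow_pow _ (show (12:ℝ)*(1/12) = 1 by norm_num),
        pow_pow _ (show (4:ℝ)*(1/4) = 1 by norm_num),
        pow_pow _ (show (6:ℝ)*(1/6) = 1 by norm_num)]
    simp only [ENNReal.rpow_one]
    rw [show (6:ℝ) = ((6:ℕ):ℝ) by norm_num, ENNReal.rpow_natCast]
    ring
  -- Level k Hölder
  have hK : ∀ i j, (∑' k, ∑' l, x i j k l ^ (6:ℝ)) ≤
      ((∑' k, ∑' l, x i j k l ^ (3:ℝ)) ^ (4:ℝ)) ^ (1/12:ℝ) *
      ((∑' k, ∑' l, x i j k l ^ (12:ℝ)) ^ (1/4:ℝ)) ^ (1/3:ℝ) *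
      ((∑' k, (∑' l, x i j k l ^ (4:ℝ)) ^ (3:ℝ)) ^ (1/3:ℝ)) ^ (1/4:ℝ) *
      ((∑' k, (∑' l, x i j k l ^ (12:ℝ)) ^ (1/3:ℝ)) ^ (3:ℝ)) ^ (1/12:ℝ) *
      (∑' k, (∑' l, x i j k l ^ (12:ℝ)) ^ (1/2:ℝ)) ^ (1/6:ℝ) *
      (∑' k, (∑' l, x i j k l ^ (6:ℝ)) ^ (2:ℝ)) ^ (1/12:ℝ) := by
    intro i j
    have h := holder6 (fun k => ∑' l, x i j k l ^ (3:ℝ))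
        (fun k => ∑' l, x i j k l ^ (12:ℝ))
        (fun k => (∑' l, x i j k l ^ (4:ℝ)) ^ (3:ℝ))
        (fun k => (∑' l, x i j k l ^ (12:ℝ)) ^ (1/3:ℝ))
        (fun k => (∑' l, x i j k l ^ (12:ℝ)) ^ (1/2:ℝ))
        (fun k => (∑' l, x i j k l ^ (6:ℝ)) ^ (2:ℝ))
        (w1 := 1/3) (w2 := 1/12) (w3 := 1/12) (w4 := 1/4) (w5 := 1/6) (w6 := 1/12)
        (by norm_num) (by norm_num) (by norm_num) (by norm_num) (by norm_num) (by norm_num)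
        (by norm_num)
    rw [pow_pow (∑' k, ∑' l, x i j k l ^ (3:ℝ)) (show (4:ℝ)*(1/12) = 1/3 by norm_num),
        pow_pow (∑' k, ∑' l, x i j k l ^ (12:ℝ)) (show (1/4:ℝ)*(1/3) = 1/12 by norm_num),
        pow_pow (∑' k, (∑' l, x i j k l ^ (4:ℝ)) ^ (3:ℝ))
          (show (1/3:ℝ)*(1/4) = 1/12 by norm_num),
        pow_pow (∑' k, (∑' l, x i j k l ^ (12:ℝ)) ^ (1/3:ℝ))
          (show (3:ℝ)*(1/12) = 1/4 by norm_num)]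
    exact le_trans (ENNReal.tsum_le_tsum fun k => hL i j k) h
  -- Level j Hölder
  have hJ : ∀ i, (∑' j, ∑' k, ∑' l, x i j k l ^ (6:ℝ)) ≤
      (∑' j, (∑' k, ∑' l, x i j k l ^ (3:ℝ)) ^ (4:ℝ)) ^ (1/12:ℝ) *
      (∑' j, (∑' k, ∑' l, x i j k l ^ (12:ℝ)) ^ (1/4:ℝ)) ^ (1/3:ℝ) *
      ((∑' j, (∑' k, (∑' l, x i j k l ^ (4:ℝ)) ^ (3:ℝ)) ^ (1/3:ℝ)) ^ (3:ℝ)) ^ (1/12:ℝ) *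
      ((∑' j, (∑' k, (∑' l, x i j k l ^ (12:ℝ)) ^ (1/3:ℝ)) ^ (3:ℝ)) ^ (1/3:ℝ)) ^ (1/4:ℝ) *
      ((∑' j, ∑' k, (∑' l, x i j k l ^ (12:ℝ)) ^ (1/2:ℝ)) ^ (2:ℝ)) ^ (1/12:ℝ) *
      ((∑' j, ∑' k, (∑' l, x i j k l ^ (6:ℝ)) ^ (2:ℝ)) ^ (1/2:ℝ)) ^ (1/6:ℝ) := by
    intro i
    have h := holder6 (fun j => (∑' k, ∑' l, x i j k l ^ (3:ℝ)) ^ (4:ℝ))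
        (fun j => (∑' k, ∑' l, x i j k l ^ (12:ℝ)) ^ (1/4:ℝ))
        (fun j => (∑' k, (∑' l, x i j k l ^ (4:ℝ)) ^ (3:ℝ)) ^ (1/3:ℝ))
        (fun j => (∑' k, (∑' l, x i j k l ^ (12:ℝ)) ^ (1/3:ℝ)) ^ (3:ℝ))
        (fun j => ∑' k, (∑' l, x i j k l ^ (12:ℝ)) ^ (1/2:ℝ))
        (fun j => ∑' k, (∑' l, x i j k l ^ (6:ℝ)) ^ (2:ℝ))
        (w1 := 1/12) (w2 := 1/3) (w3 := 1/4) (w4 := 1/12) (w5 := 1/6) (w6 := 1/12)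
        (by norm_num) (by norm_num) (by norm_num) (by norm_num) (by norm_num) (by norm_num)
        (by norm_num)
    rw [pow_pow (∑' j, (∑' k, (∑' l, x i j k l ^ (4:ℝ)) ^ (3:ℝ)) ^ (1/3:ℝ))
          (show (3:ℝ)*(1/12) = 1/4 by norm_num),
        pow_pow (∑' j, (∑' k, (∑' l, x i j k l ^ (12:ℝ)) ^ (1/3:ℝ)) ^ (3:ℝ))
          (show (1/3:ℝ)*(1/4) = 1/12 by norm_num),
        pow_pow (∑' j, ∑' k, (∑' l, x i j k l ^ (12:ℝ)) ^ (1/2:ℝ))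
          (show (2:ℝ)*(1/12) = 1/6 by norm_num),
        pow_pow (∑' j, ∑' k, (∑' l, x i j k l ^ (6:ℝ)) ^ (2:ℝ))
          (show (1/2:ℝ)*(1/6) = 1/12 by norm_num)]
    exact le_trans (ENNReal.tsum_le_tsum fun j => hK i j) h
  -- Level i Hölder
  have hI : (∑' i, ∑' j, ∑' k, ∑' l, x i j k l ^ (6:ℝ)) ≤
      (∑' i, ∑' j, (∑' k, ∑' l, x i j k l ^ (3:ℝ)) ^ (4:ℝ)) ^ (1/12:ℝ) *
      (∑' i, ∑' j, (∑' k, ∑' l, x i j k l ^ (12:ℝ)) ^ (1/4:ℝ)) ^ (1/3:ℝ) *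
      (∑' i, (∑' j, (∑' k, (∑' l, x i j k l ^ (4:ℝ)) ^ (3:ℝ)) ^ (1/3:ℝ)) ^ (3:ℝ)) ^ (1/12:ℝ) *
      (∑' i, (∑' j, (∑' k, (∑' l, x i j k l ^ (12:ℝ)) ^ (1/3:ℝ)) ^ (3:ℝ)) ^ (1/3:ℝ)) ^ (1/4:ℝ) *
      (∑' i, (∑' j, ∑' k, (∑' l, x i j k l ^ (12:ℝ)) ^ (1/2:ℝ)) ^ (2:ℝ)) ^ (1/12:ℝ) *
      (∑' i, (∑' j, ∑' k, (∑' l, x i j k l ^ (6:ℝ)) ^ (2:ℝ)) ^ (1/2:ℝ)) ^ (1/6:ℝ) := by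
    have h := holder6 (fun i => ∑' j, (∑' k, ∑' l, x i j k l ^ (3:ℝ)) ^ (4:ℝ))
        (fun i => ∑' j, (∑' k, ∑' l, x i j k l ^ (12:ℝ)) ^ (1/4:ℝ))
        (fun i => (∑' j, (∑' k, (∑' l, x i j k l ^ (4:ℝ)) ^ (3:ℝ)) ^ (1/3:ℝ)) ^ (3:ℝ))
        (fun i => (∑' j, (∑' k, (∑' l, x i j k l ^ (12:ℝ)) ^ (1/3:ℝ)) ^ (3:ℝ)) ^ (1/3:ℝ))
        (fun i => (∑' j, ∑' k, (∑' l, x i j k l ^ (12:ℝ)) ^ (1/2:ℝ)) ^ (2:ℝ))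
        (fun i => (∑' j, ∑' k, (∑' l, x i j k l ^ (6:ℝ)) ^ (2:ℝ)) ^ (1/2:ℝ))
        (w1 := 1/12) (w2 := 1/3) (w3 := 1/12) (w4 := 1/4) (w5 := 1/12) (w6 := 1/6)
        (by norm_num) (by norm_num) (by norm_num) (by norm_num) (by norm_num) (by norm_num)
        (by norm_num)
    exact le_trans (ENNReal.tsum_le_tsum fun i => hJ i) h
  -- Minkowski comparisons
  have hT1 : (∑' i, ∑' j, (∑' k, ∑' l, x i j k l ^ (3:ℝ)) ^ (4:ℝ)) ≤
      (∑' k, ∑' l, (∑' i, ∑' j, x i j k l ^ (12:ℝ)) ^ (1/4:ℝ)) ^ (4:ℝ) := by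
    have h := mink_tsum (g := fun (a : K × L) (b : I × J) => x b.1 b.2 a.1 a.2 ^ (3:ℝ))
      (p := (4:ℝ)) (by norm_num)
    simp only [pow_pow _ (show (3:ℝ)*4 = 12 by norm_num), ENNReal.tsum_prod'] at h
    exact h
  have hT3 : (∑' i, (∑' j, (∑' k, (∑' l, x i j k l ^ (4:ℝ)) ^ (3:ℝ)) ^ (1/3:ℝ)) ^ (3:ℝ)) ≤
      (∑' j, ∑' l, (∑' i, ∑' k, x i j k l ^ (12:ℝ)) ^ (1/3:ℝ)) ^ (3:ℝ) := by
    have hA := mink_tsum (g := fun (j : J) (i : I) =>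
        (∑' k, (∑' l, x i j k l ^ (4:ℝ)) ^ (3:ℝ)) ^ (1/3:ℝ)) (p := (3:ℝ)) (by norm_num)
    simp only [pow_pow _ (show (1/3:ℝ)*3 = 1 by norm_num), ENNReal.rpow_one] at hA
    refine le_trans hA (ENNReal.rpow_le_rpow (ENNReal.tsum_le_tsum fun j => ?_) (by norm_num))
    have hB := mink_tsum (g := fun (l : L) (ik : I × K) => x ik.1 j ik.2 l ^ (4:ℝ))
      (p := (3:ℝ)) (by norm_num)
    simp only [pow_pow _ (show (4:ℝ)*3 = 12 by norm_num), ENNReal.tsum_prod'] at hB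
    have h2 := ENNReal.rpow_le_rpow hB (show (0:ℝ) ≤ 1/3 by norm_num)
    rwa [pow_pow _ (show (3:ℝ)*(1/3) = 1 by norm_num), ENNReal.rpow_one] at h2
  have hT4 : (∑' i, (∑' j, (∑' k, (∑' l, x i j k l ^ (12:ℝ)) ^ (1/3:ℝ)) ^ (3:ℝ)) ^ (1/3:ℝ)) ≤
      ∑' i, ∑' k, (∑' j, ∑' l, x i j k l ^ (12:ℝ)) ^ (1/3:ℝ) := by
    refine ENNReal.tsum_le_tsum fun i => ?_
    have h := mink_tsum (g := fun (k : K) (j : J) =>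
        (∑' l, x i j k l ^ (12:ℝ)) ^ (1/3:ℝ)) (p := (3:ℝ)) (by norm_num)
    simp only [pow_pow _ (show (1/3:ℝ)*3 = 1 by norm_num), ENNReal.rpow_one] at h
    have h2 := ENNReal.rpow_le_rpow h (show (0:ℝ) ≤ 1/3 by norm_num)
    rwa [pow_pow _ (show (3:ℝ)*(1/3) = 1 by norm_num), ENNReal.rpow_one] at h2
  have hT5 : (∑' i, (∑' j, ∑' k, (∑' l, x i j k l ^ (12:ℝ)) ^ (1/2:ℝ)) ^ (2:ℝ)) ≤
      (∑' j, ∑' k, (∑' i, ∑' l, x i j k l ^ (12:ℝ)) ^ (1/2:ℝ)) ^ (2:ℝ) := by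
    have h := mink_tsum (g := fun (a : J × K) (i : I) =>
        (∑' l, x i a.1 a.2 l ^ (12:ℝ)) ^ (1/2:ℝ)) (p := (2:ℝ)) (by norm_num)
    simp only [pow_pow _ (show (1/2:ℝ)*2 = 1 by norm_num), ENNReal.rpow_one,
      ENNReal.tsum_prod'] at h
    exact h
  have hT6 : (∑' i, (∑' j, ∑' k, (∑' l, x i j k l ^ (6:ℝ)) ^ (2:ℝ)) ^ (1/2:ℝ)) ≤
      ∑' i, ∑' l, (∑' j, ∑' k, x i j k l ^ (12:ℝ)) ^ (1/2:ℝ) := by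
    refine ENNReal.tsum_le_tsum fun i => ?_
    have h := mink_tsum (g := fun (l : L) (a : J × K) => x i a.1 a.2 l ^ (6:ℝ))
      (p := (2:ℝ)) (by norm_num)
    simp only [pow_pow _ (show (6:ℝ)*2 = 12 by norm_num), ENNReal.tsum_prod'] at h
    have h2 := ENNReal.rpow_le_rpow h (show (0:ℝ) ≤ 1/2 by norm_num)
    rwa [pow_pow _ (show (2:ℝ)*(1/2) = 1 by norm_num), ENNReal.rpow_one] at h2
  -- Assemble
  refine le_trans hI ?_
  calc _ ≤ ((∑' k, ∑' l, (∑' i, ∑' j, x i j k l ^ (12:ℝ)) ^ (1/4:ℝ)) ^ (4:ℝ)) ^ (1/12:ℝ) *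
      (∑' i, ∑' j, (∑' k, ∑' l, x i j k l ^ (12:ℝ)) ^ (1/4:ℝ)) ^ (1/3:ℝ) *
      ((∑' j, ∑' l, (∑' i, ∑' k, x i j k l ^ (12:ℝ)) ^ (1/3:ℝ)) ^ (3:ℝ)) ^ (1/12:ℝ) *
      (∑' i, ∑' k, (∑' j, ∑' l, x i j k l ^ (12:ℝ)) ^ (1/3:ℝ)) ^ (1/4:ℝ) *
      ((∑' j, ∑' k, (∑' i, ∑' l, x i j k l ^ (12:ℝ)) ^ (1/2:ℝ)) ^ (2:ℝ)) ^ (1/12:ℝ) *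
      (∑' i, ∑' l, (∑' j, ∑' k, x i j k l ^ (12:ℝ)) ^ (1/2:ℝ)) ^ (1/6:ℝ) := by
        gcongr
    _ = _ := by
        rw [pow_pow (∑' k, ∑' l, (∑' i, ∑' j, x i j k l ^ (12:ℝ)) ^ (1/4:ℝ))
              (show (4:ℝ)*(1/12) = 1/3 by norm_num),
            pow_pow (∑' j, ∑' l, (∑' i, ∑' k, x i j k l ^ (12:ℝ)) ^ (1/3:ℝ))
              (show (3:ℝ)*(1/12) = 1/4 by norm_num),
            pow_pow (∑' j, ∑' k, (∑' i, ∑' l, x i j k l ^ (12:ℝ)) ^ (1/2:ℝ))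
              (show (2:ℝ)*(1/12) = 1/6 by norm_num)]
        ring
end
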